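/- arXiv:1808.03638 — 4 statements merged into one kernel-verified Lean document; each statement's English description precedes it below -/
import Mathlib

section
/- For formal power series in q (with |q|<1 interpreted as an identity of formal power series), the sum over n ≥ 0 of (1/(q;q)_∞ − 1/(q;q)_n) equals (1/(q;q)_∞) · Σ_{n≥1} q^n/(1−q^n). -/
open Finset PowerSeries

noncomputable section

/-- number of partitions of `n` -/
def pp (n : ℕ) : ℕ := Fintype.card (Nat.Partition n)

/-- number of partitions of `n` with exactly `m` parts -/
def pmn (m n : ℕ) : ℕ :=
  ((univ : Finset (Nat.Partition n)).filter fun l => l.parts.card = m).card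

/-- `p_2(n) = Σ_m m² p(m,n)` (parts count is at most `n`) -/
def p2 (n : ℕ) : ℕ := ∑ m ∈ range (n + 1), m ^ 2 * pmn m n

/-- rank = largest part − number of parts -/
def rank {n : ℕ} (l : Nat.Partition n) : ℤ := (l.parts.sup : ℤ) - l.parts.card

/-- number of partitions of `n` with rank `m` -/
def Nrank (m : ℤ) (n : ℕ) : ℕ :=
  ((univ : Finset (Nat.Partition n)).filter fun l => rank l = m).card

/-- second rank moment (rank of a partition of `n` lies in `[-n,n]`) -/
def N2 (n : ℕ) : ℤ := ∑ m ∈ Finset.Icc (-(n : ℤ)) n, m ^ 2 * Nrank m n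

/-- Andrews–Garvan crank -/
def crank {n : ℕ} (l : Nat.Partition n) : ℤ :=
  if l.parts.count 1 = 0 then (l.parts.sup : ℤ)
  else ((l.parts.filter fun a => l.parts.count 1 < a).card : ℤ) - l.parts.count 1

/-- number of partitions of `n` with crank `m`, with the usual convention for `n = 1` -/
def Mcrank (m : ℤ) (n : ℕ) : ℤ :=
  if n = 1 then (if m = 0 then -1 else if m = 1 ∨ m = -1 then 1 else 0)
  else (((univ : Finset (Nat.Partition n)).filter fun l => crank l = m).card : ℤ)

/-- second crank moment -/
def M2 (n : ℕ) : ℤ := ∑ m ∈ Finset.Icc (-(n : ℤ)) n, m ^ 2 * Mcrank m n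

def smallestPart {n : ℕ} (l : Nat.Partition n) : ℕ := sInf {a | a ∈ l.parts}

/-- total number of appearances of the smallest part in all partitions of `n` -/
def spt (n : ℕ) : ℕ := ∑ l : Nat.Partition n, l.parts.count (smallestPart l)

def d (n : ℕ) : ℕ := n.divisors.card
def sigma1 (n : ℕ) : ℕ := ∑ k ∈ n.divisors, k

/-- partitions of `n` into exactly `m` distinct parts -/
def bmn (m n : ℕ) : ℕ :=
  ((univ : Finset (Nat.Partition n)).filter fun l => l.parts.card = m ∧ l.parts.Nodup).card

/-- number of divisors of `m` that are ≤ N -/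
def g (m N : ℕ) : ℕ := (m.divisors.filter fun e => e ≤ N).card

/-- `p(k)` minus the number of partitions of `k` with all parts ≤ N -/
def f (k N : ℕ) : ℕ :=
  pp k - ((univ : Finset (Nat.Partition k)).filter fun l => ∀ a ∈ l.parts, a ≤ N).card

/-- `S(n) = Σ_{k,N≥1} f(k,N) g(n−k,N)`; terms vanish for `k > n` or `N ≥ k` -/
def S (n : ℕ) : ℕ := ∑ k ∈ Icc 1 n, ∑ N ∈ Icc 1 n, f k N * g (n - k) N

/-- `(q;q)_n` -/
def qPoch (n : ℕ) : PowerSeries ℚ := ∏ k ∈ Icc 1 n, (1 - X ^ k)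

/-- `(q;q)_∞`, defined coefficient-wise (coefficients of `q^N` stabilize for `(q;q)_M`, `M ≥ N`) -/
def qInf : PowerSeries ℚ := PowerSeries.mk fun N => coeff N (qPoch N)

/-- `(q^{n+1};q)_∞`, defined coefficient-wise -/
def tailProd (n : ℕ) : PowerSeries ℚ :=
  PowerSeries.mk fun N => coeff N (∏ k ∈ Icc (n + 1) N, (1 - X ^ k))

/-- sum `Σ_{n≥0} a n` of a family of power series with `coeff N (a n) = 0` for `n > N` -/
def seriesSum (a : ℕ → PowerSeries ℚ) : PowerSeries ℚ :=
  PowerSeries.mk fun N => ∑ n ∈ range (N + 1), coeff N (a n)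

/-- double sum `Σ_{n1,n2≥1} a n1 n2`, assuming `coeff N (a n1 n2) = 0` for `n1 + n2 > N` -/
def seriesSum2 (a : ℕ → ℕ → PowerSeries ℚ) : PowerSeries ℚ :=
  PowerSeries.mk fun N => ∑ n1 ∈ Icc 1 N, ∑ n2 ∈ Icc 1 N, coeff N (a n1 n2)

/-- `Σ_{n≥1} q^n/(1−q^n)`, the generating function of `d(n)` -/
def divSum : PowerSeries ℚ := seriesSum fun n => X ^ (n + 1) * (1 - X ^ (n + 1))⁻¹

namespace SPTAux
def B (n N : ℕ) : ℕ :=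
  ((univ : Finset (Nat.Partition N)).filter fun l => ∀ a ∈ l.parts, a ≤ n).card
def A (n N : ℕ) : ℕ :=
  ((univ : Finset (Nat.Partition N)).filter fun l => l.parts.card ≤ n).card
lemma part_le {N : ℕ} (l : Nat.Partition N) {a : ℕ} (ha : a ∈ l.parts) : a ≤ N :=
  l.parts_sum ▸ Multiset.le_sum_of_mem ha
lemma card_parts_le {N : ℕ} (l : Nat.Partition N) : l.parts.card ≤ N := by
  have h := Multiset.card_nsmul_le_sum (s := l.parts) (fun x hx => l.parts_pos hx)
  simpa [l.parts_sum] using h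
lemma filter_split {α : Type*} [DecidableEq α] (s : Finset α) (p q : α → Prop)
    [DecidablePred p] [DecidablePred q] :
    (s.filter p).card = (s.filter fun a => p a ∧ q a).card + (s.filter fun a => p a ∧ ¬ q a).card := by
  rw [← Finset.filter_filter, ← Finset.filter_filter,
    Finset.card_filter_add_card_filter_not]

lemma B_rec (n N : ℕ) :
    B (n + 1) N = B n N + (if n + 1 ≤ N then B (n + 1) (N - (n + 1)) else 0) := by
  rw [B, filter_split (univ : Finset (Nat.Partition N)) (fun l => ∀ a ∈ l.parts, a ≤ n + 1) (fun l => (n+1) ∈ l.parts)]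
  have h2 : ((univ : Finset (Nat.Partition N)).filter
      fun l => (∀ a ∈ l.parts, a ≤ n + 1) ∧ ¬ (n+1) ∈ l.parts).card = B n N := by
    rw [B]
    congr 1
    apply Finset.filter_congr
    intro l _
    constructor
    · rintro ⟨h1, h2⟩ a ha
      have h3 := h1 a ha
      rcases Nat.lt_or_ge a (n+1) with h | h
      · omega
      · have : a = n + 1 := by omega
        subst this
        exact (h2 ha).elim
    · intro h
      exact ⟨fun a ha => (h a ha).trans (Nat.le_succ n), fun hmem => by have := h _ hmem; omega⟩
  rw [h2, Nat.add_comm]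
  congr 1
  split_ifs with hle
  · -- bijection: remove one part equal to n+1
    rw [B]
    refine Finset.card_bij' (i := fun l hl => (⟨l.parts.erase (n+1),
        fun {a} ha => l.parts_pos (Multiset.mem_of_mem_erase ha), by
          have hmem : (n+1) ∈ l.parts := ((Finset.mem_filter.mp hl).2).2
          have := Multiset.cons_erase hmem
          have hsum := l.parts_sum
          have : ((n+1) ::ₘ l.parts.erase (n+1)).sum = N := by rw [this]; exact hsum
          rw [Multiset.sum_cons] at this
          omega⟩ : Nat.Partition (N - (n+1))))
      (j := fun m hm => (⟨(n+1) ::ₘ m.parts, fun {a} ha => by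
          rcases Multiset.mem_cons.mp ha with h | h
          · omega
          · exact m.parts_pos h, by
          rw [Multiset.sum_cons, m.parts_sum]; omega⟩ : Nat.Partition N))
      ?_ ?_ ?_ ?_
    · intro l hl
      simp only [Finset.mem_filter, Finset.mem_univ, true_and] at hl ⊢
      intro a ha
      exact hl.1 a (Multiset.mem_of_mem_erase ha)
    · intro m hm
      simp only [Finset.mem_filter, Finset.mem_univ, true_and] at hm ⊢
      constructor
      · intro a ha
        rcases Multiset.mem_cons.mp ha with h | h
        · omega
        · exact hm a h
      · exact Multiset.mem_cons_self _ _
    · intro l hl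
      apply Nat.Partition.ext
      simp only
      exact Multiset.cons_erase ((Finset.mem_filter.mp hl).2).2
    · intro m hm
      apply Nat.Partition.ext
      simp only
      exact Multiset.erase_cons_head _ _
  · rw [Finset.card_eq_zero, Finset.filter_eq_empty_iff]
    intro l _
    rintro ⟨-, hmem⟩
    exact hle (part_le l hmem)


lemma shrink_sum : ∀ (s : Multiset ℕ), (∀ a ∈ s, 0 < a) →
    ((s.filter (fun a => ¬ a = 1)).map (fun a => a - 1)).sum + Multiset.card s = s.sum := by
  intro s
  induction s using Multiset.induction_on with
  | empty => simp
  | cons a s ih =>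
    intro hpos
    have hs := ih (fun x hx => hpos x (Multiset.mem_cons_of_mem hx))
    by_cases ha : a = 1
    · rw [Multiset.filter_cons_of_neg _ (by simp [ha])]
      simp only [Multiset.card_cons, Multiset.sum_cons]
      omega
    · rw [Multiset.filter_cons_of_pos _ (by simpa using ha)]
      simp only [Multiset.map_cons, Multiset.sum_cons, Multiset.card_cons]
      have : 0 < a := hpos a (Multiset.mem_cons_self _ _)
      omega

lemma grow_sum (s : Multiset ℕ) : (s.map (fun a => a + 1)).sum = s.sum + Multiset.card s := by
  induction s using Multiset.induction_on with
  | empty => simp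
  | cons a s ih => simp only [Multiset.map_cons, Multiset.sum_cons, Multiset.card_cons]; omega

lemma A_rec (n N : ℕ) :
    A (n + 1) N = A n N + (if n + 1 ≤ N then A (n + 1) (N - (n + 1)) else 0) := by
  rw [A, filter_split (univ : Finset (Nat.Partition N))
    (fun l => l.parts.card ≤ n + 1) (fun l => l.parts.card = n + 1)]
  have h2 : ((univ : Finset (Nat.Partition N)).filter
      fun l => l.parts.card ≤ n + 1 ∧ ¬ l.parts.card = n + 1).card = A n N := by
    rw [A]
    congr 1
    apply Finset.filter_congr
    intro l _
    constructor
    · rintro ⟨h1, h2⟩; omega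
    · intro h; omega
  rw [h2, Nat.add_comm]
  congr 1
  have hfc : ((univ : Finset (Nat.Partition N)).filter
      fun l => l.parts.card ≤ n + 1 ∧ l.parts.card = n + 1) =
      (univ : Finset (Nat.Partition N)).filter fun l => l.parts.card = n + 1 := by
    apply Finset.filter_congr
    intro l _
    constructor
    · rintro ⟨-, h⟩; exact h
    · intro h; exact ⟨le_of_eq h, h⟩
  rw [hfc]
  split_ifs with hle
  · rw [A]
    refine Finset.card_bij'
      (i := fun l hl => (⟨(l.parts.filter (fun a => ¬ a = 1)).map (fun a => a - 1),
        fun {b} hb => by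
          obtain ⟨a, ha, rfl⟩ := Multiset.mem_map.mp hb
          have h1 := (Multiset.mem_filter.mp ha).2
          have h2 := l.parts_pos (Multiset.mem_filter.mp ha).1
          omega, by
          have hcard : l.parts.card = n + 1 := (Finset.mem_filter.mp hl).2
          have := shrink_sum l.parts (fun a ha => l.parts_pos ha)
          rw [l.parts_sum, hcard] at this
          omega⟩ : Nat.Partition (N - (n + 1))))
      (j := fun m hm => (⟨m.parts.map (fun a => a + 1) +
          Multiset.replicate (n + 1 - m.parts.card) 1,
        fun {b} hb => by
          rcases Multiset.mem_add.mp hb with h | h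
          · obtain ⟨a, _, rfl⟩ := Multiset.mem_map.mp h
            omega
          · rw [Multiset.eq_of_mem_replicate h]; omega, by
          rw [Multiset.sum_add, grow_sum, m.parts_sum, Multiset.sum_replicate, smul_eq_mul,
            mul_one]
          have hcard : m.parts.card ≤ n + 1 := (Finset.mem_filter.mp hm).2
          omega⟩ : Nat.Partition N))
      ?_ ?_ ?_ ?_
    · intro l hl
      simp only [Finset.mem_filter, Finset.mem_univ, true_and] at hl ⊢
      calc Multiset.card ((l.parts.filter (fun a => ¬ a = 1)).map (fun a => a - 1))
          = Multiset.card (l.parts.filter (fun a => ¬ a = 1)) := Multiset.card_map _ _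
        _ ≤ Multiset.card l.parts := Multiset.card_le_card (Multiset.filter_le _ _)
        _ = n + 1 := hl
    · intro m hm
      simp only [Finset.mem_filter, Finset.mem_univ, true_and] at hm ⊢
      rw [Multiset.card_add, Multiset.card_map, Multiset.card_replicate]
      omega
    · intro l hl
      simp only [Finset.mem_filter, Finset.mem_univ, true_and] at hl
      apply Nat.Partition.ext
      simp only
      have hmapmap : ((l.parts.filter (fun a => ¬ a = 1)).map (fun a => a - 1)).map
          (fun a => a + 1) = l.parts.filter (fun a => ¬ a = 1) := by
        rw [Multiset.map_map]
        rw [Multiset.map_congr rfl (fun a ha => by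
          have h1 := (Multiset.mem_filter.mp ha).2
          have h2 := l.parts_pos (Multiset.mem_filter.mp ha).1
          simp only [Function.comp_apply, id_eq]
          omega : ∀ a ∈ l.parts.filter (fun a => ¬ a = 1),
            ((fun a => a + 1) ∘ (fun a => a - 1)) a = id a)]
        rw [Multiset.map_id]
      rw [hmapmap, Multiset.card_map]
      have hsplit : l.parts.filter (fun a => a = 1) +
          l.parts.filter (fun a => ¬ a = 1) = l.parts := Multiset.filter_add_not _ _
      have hcards : Multiset.card (l.parts.filter (fun a => a = 1)) +
          Multiset.card (l.parts.filter (fun a => ¬ a = 1)) = n + 1 := by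
        rw [← Multiset.card_add, hsplit, hl]
      have hrep : Multiset.replicate
          (Multiset.card (l.parts.filter (fun a => a = 1))) 1 =
          l.parts.filter (fun a => a = 1) := by
        symm
        rw [Multiset.eq_replicate_card]
        intro b hb
        exact (Multiset.mem_filter.mp hb).2
      have : n + 1 - Multiset.card (l.parts.filter (fun a => ¬ a = 1)) =
          Multiset.card (l.parts.filter (fun a => a = 1)) := by omega
      rw [this, hrep, add_comm, hsplit]
    · intro m hm
      apply Nat.Partition.ext
      simp only
      rw [Multiset.filter_add]
      have h1 : (m.parts.map (fun a => a + 1)).filter (fun a => ¬ a = 1) =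
          m.parts.map (fun a => a + 1) := by
        rw [Multiset.filter_eq_self]
        intro b hb
        obtain ⟨a, hma, rfl⟩ := Multiset.mem_map.mp hb
        have := m.parts_pos hma
        omega
      have h2 : (Multiset.replicate (n + 1 - m.parts.card) 1).filter (fun a => ¬ a = 1) = 0 := by
        rw [Multiset.filter_eq_nil]
        intro b hb
        rw [Multiset.eq_of_mem_replicate hb]
        simp
      rw [h1, h2, add_zero, Multiset.map_map]
      rw [Multiset.map_congr rfl (fun a _ => by simp : ∀ a ∈ m.parts,
        ((fun a => a - 1) ∘ (fun a => a + 1)) a = id a), Multiset.map_id]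
  · rw [Finset.card_eq_zero, Finset.filter_eq_empty_iff]
    intro l _
    intro hcard
    have := card_parts_le l
    omega

lemma A_eq_B : ∀ N n, A n N = B n N := by
  intro N
  induction N using Nat.strong_induction_on with
  | _ N ih =>
    intro n
    induction n with
    | zero =>
      rw [A, B]
      congr 1
      apply Finset.filter_congr
      intro l _
      simp only [Nat.le_zero, Multiset.card_eq_zero]
      constructor
      · intro h a ha
        rw [h] at ha
        simp at ha
      · intro h
        rw [Multiset.eq_zero_iff_forall_notMem]
        intro a ha
        have h1 := h a ha
        have h2 := l.parts_pos ha
        omega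
    | succ n ihn =>
      rw [A_rec, B_rec, ihn]
      congr 1
      split_ifs with h
      · exact ih (N - (n + 1)) (by omega) (n + 1)
      · rfl


lemma pp_eq (N : ℕ) : pp N = (univ : Finset (Nat.Partition N)).card := (Finset.card_univ).symm

/-- number of partitions of `N` in which the part `m` appears at least `c` times -/
def Dc (m c N : ℕ) : ℕ :=
  ((univ : Finset (Nat.Partition N)).filter fun l => c ≤ l.parts.count m).card

lemma Dc_eq (m c N : ℕ) (hm : 1 ≤ m) :
    Dc m c N = if m * c ≤ N then pp (N - m * c) else 0 := by
  have hcm : c * m = m * c := Nat.mul_comm c m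
  split_ifs with h
  · rw [Dc, pp, ← Finset.card_univ]
    refine Finset.card_bij'
      (i := fun l hl => (⟨l.parts - Multiset.replicate c m,
        fun {a} ha => l.parts_pos (Multiset.mem_of_le (Multiset.sub_le_self _ _) ha), by
          have hle : Multiset.replicate c m ≤ l.parts :=
            Multiset.le_count_iff_replicate_le.mp (Finset.mem_filter.mp hl).2
          have h1 : l.parts - Multiset.replicate c m + Multiset.replicate c m = l.parts :=
            tsub_add_cancel_of_le hle
          have h2 := congrArg Multiset.sum h1
          rw [Multiset.sum_add, Multiset.sum_replicate, smul_eq_mul, l.parts_sum] at h2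
          omega⟩ : Nat.Partition (N - m * c)))
      (j := fun t ht => (⟨t.parts + Multiset.replicate c m,
        fun {a} ha => by
          rcases Multiset.mem_add.mp ha with h' | h'
          · exact t.parts_pos h'
          · rw [Multiset.eq_of_mem_replicate h']; omega, by
          rw [Multiset.sum_add, Multiset.sum_replicate, smul_eq_mul, t.parts_sum]
          omega⟩ : Nat.Partition N))
      ?_ ?_ ?_ ?_
    · intro l hl
      exact Finset.mem_univ _
    · intro t ht
      simp only [Finset.mem_filter, Finset.mem_univ, true_and]
      rw [Multiset.count_add, Multiset.count_replicate_self]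
      omega
    · intro l hl
      apply Nat.Partition.ext
      simp only
      exact tsub_add_cancel_of_le
        (Multiset.le_count_iff_replicate_le.mp (Finset.mem_filter.mp hl).2)
    · intro t ht
      apply Nat.Partition.ext
      simp only
      exact add_tsub_cancel_right _ _
  · rw [Dc, Finset.card_eq_zero, Finset.filter_eq_empty_iff]
    intro l _ hcount
    have hle : Multiset.replicate c m ≤ l.parts :=
      Multiset.le_count_iff_replicate_le.mp hcount
    obtain ⟨u, hu⟩ := Multiset.le_iff_exists_add.mp hle
    have h2 : c * m + u.sum = N := by
      rw [← l.parts_sum, hu, Multiset.sum_add, Multiset.sum_replicate, smul_eq_mul]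
    omega

lemma sum_Icc_ind (K N : ℕ) (h : K ≤ N) :
    (∑ c ∈ Icc 1 N, if c ≤ K then 1 else 0) = K := by
  rw [← Finset.card_filter]
  have : (Icc 1 N).filter (fun c => c ≤ K) = Icc 1 K := by
    ext x
    simp only [Finset.mem_filter, Finset.mem_Icc]
    omega
  rw [this, Nat.card_Icc]
  omega

lemma count_le_card {N : ℕ} (l : Nat.Partition N) (m : ℕ) :
    l.parts.count m ≤ Multiset.card l.parts :=
  Multiset.count_le_card _ _

lemma sum_Dc (m N : ℕ) (hm : 1 ≤ m) :
    ∑ c ∈ Icc 1 N, Dc m c N = ∑ l : Nat.Partition N, l.parts.count m := by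
  have h1 : ∀ c, Dc m c N =
      ∑ l : Nat.Partition N, (if c ≤ l.parts.count m then 1 else 0) :=
    fun c => Finset.card_filter _ _
  calc ∑ c ∈ Icc 1 N, Dc m c N
      = ∑ c ∈ Icc 1 N, ∑ l : Nat.Partition N, (if c ≤ l.parts.count m then 1 else 0) := by
        exact Finset.sum_congr rfl fun c _ => h1 c
    _ = ∑ l : Nat.Partition N, ∑ c ∈ Icc 1 N, (if c ≤ l.parts.count m then 1 else 0) :=
        Finset.sum_comm
    _ = ∑ l : Nat.Partition N, l.parts.count m := by
        refine Finset.sum_congr rfl fun l _ => ?_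
        exact sum_Icc_ind _ _ ((count_le_card l m).trans ((card_parts_le l)))

lemma sum_count (N : ℕ) (s : Multiset ℕ) (hs : ∀ a ∈ s, 1 ≤ a ∧ a ≤ N) :
    ∑ n ∈ range (N + 1), s.count (n + 1) = Multiset.card s := by
  induction s using Multiset.induction_on with
  | empty => simp
  | cons a s ih =>
    have ha := hs a (Multiset.mem_cons_self _ _)
    have ih' := ih (fun x hx => hs x (Multiset.mem_cons_of_mem hx))
    simp only [Multiset.count_cons, Multiset.card_cons, Finset.sum_add_distrib, ih']
    have : ∀ n ∈ range (N + 1), (if n + 1 = a then 1 else 0) = if n = a - 1 then 1 else 0 := by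
      intro n _
      have : (n + 1 = a) ↔ (n = a - 1) := by omega
      simp [this]
    rw [Finset.sum_congr rfl this, Finset.sum_ite_eq' (range (N + 1)) (a - 1) (fun _ => 1),
      if_pos (Finset.mem_range.mpr (by omega))]

/-- the indicator `1 ≤ j ∧ m ∣ j ∧ m ≤ j` -/
def indm (m j : ℕ) : ℕ := if m ≤ j ∧ m ∣ j then 1 else 0

lemma indm_eq_sum (m j N : ℕ) (hm : 1 ≤ m) (hj : j ≤ N) :
    indm m j = ∑ c ∈ Icc 1 N, (if j = m * c then 1 else 0) := by
  rw [indm]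
  split_ifs with h
  · obtain ⟨hmj, k, hk⟩ := h
    have hk1 : 1 ≤ k := by
      rcases Nat.eq_zero_or_pos k with rfl | h'
      · omega
      · exact h'
    have hkN : k ≤ N := by nlinarith
    rw [Finset.sum_eq_single k]
    · rw [if_pos hk]
    · intro c _ hc
      rw [if_neg]
      intro hjc
      exact hc (by nlinarith)
    · intro hk'
      exact absurd (Finset.mem_Icc.mpr ⟨hk1, hkN⟩) hk'
  · symm
    apply Finset.sum_eq_zero
    intro c hc
    rw [if_neg]
    intro hjc
    apply h
    have hc1 : 1 ≤ c := (Finset.mem_Icc.mp hc).1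
    constructor
    · calc m = m * 1 := (Nat.mul_one m).symm
        _ ≤ m * c := Nat.mul_le_mul_left m hc1
        _ = j := hjc.symm
    · exact ⟨c, hjc⟩

lemma antidiag_indm (m N : ℕ) (hm : 1 ≤ m) :
    ∑ jk ∈ Finset.HasAntidiagonal.antidiagonal N, pp jk.1 * indm m jk.2
      = ∑ l : Nat.Partition N, l.parts.count m := by
  rw [← Finset.Nat.sum_antidiagonal_swap]
  simp only [Prod.fst_swap, Prod.snd_swap]
  rw [Finset.Nat.sum_antidiagonal_eq_sum_range_succ (f := fun j i => pp i * indm m j)]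
  calc ∑ j ∈ range (N + 1), pp (N - j) * indm m j
      = ∑ j ∈ range (N + 1), ∑ c ∈ Icc 1 N, (if j = m * c then pp (N - j) else 0) := by
        refine Finset.sum_congr rfl fun j hj => ?_
        rw [indm_eq_sum m j N hm (by simpa [Nat.lt_succ_iff] using Finset.mem_range.mp hj),
          Finset.mul_sum]
        exact Finset.sum_congr rfl fun c _ => by rw [mul_ite, mul_one, mul_zero]
    _ = ∑ c ∈ Icc 1 N, ∑ j ∈ range (N + 1), (if j = m * c then pp (N - j) else 0) :=
        Finset.sum_comm
    _ = ∑ c ∈ Icc 1 N, Dc m c N := by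
        refine Finset.sum_congr rfl fun c hc => ?_
        rw [Finset.sum_ite_eq' (range (N + 1)) (m * c) (fun j => pp (N - j))]
        rw [Dc_eq m c N hm]
        simp only [Finset.mem_range, Nat.lt_succ_iff]
    _ = ∑ l : Nat.Partition N, l.parts.count m := sum_Dc m N hm

lemma bridge (N : ℕ) :
    (∑ jk ∈ Finset.HasAntidiagonal.antidiagonal N, pp jk.1 * (∑ n ∈ range (N + 1), indm (n + 1) jk.2))
      + ∑ n ∈ range (N + 1), B n N = (N + 1) * pp N := by
  have hL : ∑ jk ∈ Finset.HasAntidiagonal.antidiagonal N, pp jk.1 * (∑ n ∈ range (N + 1), indm (n + 1) jk.2)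
      = ∑ l : Nat.Partition N, Multiset.card l.parts := by
    calc ∑ jk ∈ Finset.HasAntidiagonal.antidiagonal N, pp jk.1 * (∑ n ∈ range (N + 1), indm (n + 1) jk.2)
        = ∑ jk ∈ Finset.HasAntidiagonal.antidiagonal N, ∑ n ∈ range (N + 1), pp jk.1 * indm (n + 1) jk.2 := by
          exact Finset.sum_congr rfl fun jk _ => Finset.mul_sum _ _ _
      _ = ∑ n ∈ range (N + 1), ∑ jk ∈ Finset.HasAntidiagonal.antidiagonal N, pp jk.1 * indm (n + 1) jk.2 :=
          Finset.sum_comm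
      _ = ∑ n ∈ range (N + 1), ∑ l : Nat.Partition N, l.parts.count (n + 1) := by
          exact Finset.sum_congr rfl fun n _ => antidiag_indm (n + 1) N (by omega)
      _ = ∑ l : Nat.Partition N, ∑ n ∈ range (N + 1), l.parts.count (n + 1) :=
          Finset.sum_comm
      _ = ∑ l : Nat.Partition N, Multiset.card l.parts := by
          refine Finset.sum_congr rfl fun l _ => ?_
          exact sum_count N l.parts (fun a ha => ⟨l.parts_pos ha, part_le l ha⟩)
  rw [hL]
  have hA : ∀ n, pp N = A n N + ((univ : Finset (Nat.Partition N)).filter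
      fun l => ¬ Multiset.card l.parts ≤ n).card := by
    intro n
    rw [pp_eq, A, Finset.card_filter_add_card_filter_not]
  have hcard : ∀ l : Nat.Partition N, Multiset.card l.parts
      = ∑ n ∈ range (N + 1), (if ¬ Multiset.card l.parts ≤ n then 1 else 0) := by
    intro l
    have h1 : ∀ n ∈ range (N+1), (if ¬ Multiset.card l.parts ≤ n then 1 else 0)
        = if n < Multiset.card l.parts then 1 else 0 := by
      intro n _
      have : (¬ Multiset.card l.parts ≤ n) ↔ n < Multiset.card l.parts := by omega
      simp [this]
    rw [Finset.sum_congr rfl h1, ← Finset.card_filter]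
    have : (range (N+1)).filter (fun n => n < Multiset.card l.parts)
        = range (Multiset.card l.parts) := by
      ext x
      simp only [Finset.mem_filter, Finset.mem_range]
      have := card_parts_le l
      omega
    rw [this, Finset.card_range]
  calc ∑ l : Nat.Partition N, Multiset.card l.parts + ∑ n ∈ range (N + 1), B n N
      = ∑ l : Nat.Partition N, ∑ n ∈ range (N + 1),
          (if ¬ Multiset.card l.parts ≤ n then 1 else 0) + ∑ n ∈ range (N + 1), A n N := by
        rw [Finset.sum_congr rfl (fun l _ => hcard l),
          Finset.sum_congr rfl (fun n (_ : n ∈ range (N+1)) => (A_eq_B N n).symm)]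
    _ = ∑ n ∈ range (N + 1), (((univ : Finset (Nat.Partition N)).filter
          fun l => ¬ Multiset.card l.parts ≤ n).card + A n N) := by
        rw [Finset.sum_comm (s := univ) (t := range (N+1))]
        rw [← Finset.sum_add_distrib]
        refine Finset.sum_congr rfl fun n _ => ?_
        rw [← Finset.card_filter]
    _ = ∑ n ∈ range (N + 1), pp N := by
        refine Finset.sum_congr rfl fun n _ => ?_
        rw [hA n, Nat.add_comm]
    _ = (N + 1) * pp N := by
        rw [Finset.sum_const, Finset.card_range, smul_eq_mul]


-- Power series layer

/-- generating function of `B n` -/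
def PB (n : ℕ) : PowerSeries ℚ := PowerSeries.mk fun N => (B n N : ℚ)

/-- generating function of `pp` -/
def PP : PowerSeries ℚ := PowerSeries.mk fun N => (pp N : ℚ)

/-- generating function `1/(1-q^k)` -/
def G (k : ℕ) : PowerSeries ℚ := PowerSeries.mk fun N => if k ∣ N then (1 : ℚ) else 0

lemma inv_of_mul_eq_one {f g : PowerSeries ℚ} (h : f * g = 1) : f⁻¹ = g := by
  have hc : constantCoeff f ≠ 0 := by
    intro h0
    have h1 := congrArg (constantCoeff) h
    rw [map_mul, h0, zero_mul, map_one] at h1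
    exact zero_ne_one h1
  rw [PowerSeries.inv_eq_iff_mul_eq_one hc, mul_comm]
  exact h

lemma B_zero (N : ℕ) : B 0 N = if N = 0 then 1 else 0 := by
  unfold B
  split_ifs with h
  · subst h
    rw [Finset.filter_true_of_mem, Finset.card_univ, Fintype.card_unique]
    intro l _ a ha
    simp at ha
  · rw [Finset.card_eq_zero, Finset.filter_eq_empty_iff]
    intro l _
    simp only [not_forall]
    have hne : l.parts ≠ 0 := by
      intro h0
      exact h (by simpa [h0] using l.parts_sum.symm)
    obtain ⟨a, ha⟩ := Multiset.exists_mem_of_ne_zero hne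
    exact ⟨a, ha, by have := l.parts_pos ha; omega⟩

lemma B_full {n N : ℕ} (h : N ≤ n) : B n N = pp N := by
  rw [B, pp_eq, Finset.filter_true_of_mem]
  intro l _ a ha
  exact (part_le l ha).trans h

lemma qPoch_zero : qPoch 0 = 1 := by
  rw [qPoch]
  simp

lemma qPoch_succ (n : ℕ) : qPoch (n + 1) = qPoch n * (1 - X ^ (n + 1)) :=
  Finset.prod_Icc_succ_top (by omega) _

lemma PB_zero : PB 0 = 1 := by
  ext N
  rw [PB, PowerSeries.coeff_mk, PowerSeries.coeff_one, B_zero]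
  split_ifs <;> norm_num

lemma one_sub_mul_PB (n : ℕ) : (1 - X ^ (n + 1)) * PB (n + 1) = PB n := by
  ext N
  rw [sub_mul, one_mul, map_sub, PowerSeries.coeff_X_pow_mul']
  simp only [PB, PowerSeries.coeff_mk]
  have hrec := B_rec n N
  split_ifs with h
  · rw [if_pos h] at hrec
    rw [hrec]
    push_cast
    ring
  · rw [if_neg h] at hrec
    rw [hrec]
    push_cast
    ring

lemma qPoch_mul_PB (n : ℕ) : qPoch n * PB n = 1 := by
  induction n with
  | zero => rw [qPoch_zero, PB_zero, one_mul]
  | succ n ih =>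
    rw [qPoch_succ, mul_assoc, one_sub_mul_PB, ih]

lemma qPoch_inv (n : ℕ) : (qPoch n)⁻¹ = PB n := inv_of_mul_eq_one (qPoch_mul_PB n)

lemma coeff_qPoch_inv (n N : ℕ) : (coeff N) (qPoch n)⁻¹ = (B n N : ℚ) := by
  rw [qPoch_inv, PB, PowerSeries.coeff_mk]

lemma coeff_qPoch_stable (N : ℕ) : ∀ M, N ≤ M → (coeff N) (qPoch M) = (coeff N) (qPoch N) := by
  intro M
  induction M with
  | zero =>
    intro h
    have hN : N = 0 := Nat.le_zero.mp h
    subst hN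
    rfl
  | succ M ih =>
    intro h
    rcases Nat.eq_or_lt_of_le h with rfl | h'
    · rfl
    · have hNM : N ≤ M := by omega
      rw [qPoch_succ, mul_sub, mul_one, map_sub, ih hNM]
      have hz : (coeff N) (qPoch M * X ^ (M + 1)) = 0 := by
        rw [mul_comm, PowerSeries.coeff_X_pow_mul', if_neg (by omega)]
      rw [hz, sub_zero]

lemma coeff_qInf (N : ℕ) : (coeff N) qInf = (coeff N) (qPoch N) := by
  rw [qInf, PowerSeries.coeff_mk]

lemma qInf_mul_PP : qInf * PP = 1 := by
  ext N
  rw [PowerSeries.coeff_mul]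
  have hterms : ∀ jk ∈ Finset.HasAntidiagonal.antidiagonal N,
      (coeff jk.1) qInf * (coeff jk.2) PP
        = (coeff jk.1) (qPoch N) * (coeff jk.2) (PB N) := by
    intro jk hjk
    have hsum := Finset.HasAntidiagonal.mem_antidiagonal.mp hjk
    rw [coeff_qInf, coeff_qPoch_stable jk.1 N (by omega), PP, PB,
      PowerSeries.coeff_mk, PowerSeries.coeff_mk, B_full (by omega : jk.2 ≤ N)]
  rw [Finset.sum_congr rfl hterms, ← PowerSeries.coeff_mul, qPoch_mul_PB]

lemma qInf_inv : qInf⁻¹ = PP := inv_of_mul_eq_one qInf_mul_PP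

lemma coeff_qInf_inv (N : ℕ) : (coeff N) qInf⁻¹ = (pp N : ℚ) := by
  rw [qInf_inv, PP, PowerSeries.coeff_mk]

lemma one_sub_pow_mul_G (k : ℕ) (hk : 1 ≤ k) : (1 - X ^ k : PowerSeries ℚ) * G k = 1 := by
  ext N
  rw [sub_mul, one_mul, map_sub, PowerSeries.coeff_X_pow_mul', PowerSeries.coeff_one]
  simp only [G, PowerSeries.coeff_mk]
  rcases Nat.eq_zero_or_pos N with rfl | hN
  · rw [if_pos (dvd_zero k), if_neg (by omega), if_pos rfl]
    ring
  · rw [if_neg (by omega : ¬ N = 0)]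
    by_cases hd : k ∣ N
    · rw [if_pos hd, if_pos (Nat.le_of_dvd hN hd), if_pos (Nat.dvd_sub hd dvd_rfl)]
      ring
    · rw [if_neg hd]
      split_ifs with h2 h3
      · exact absurd ((Nat.sub_add_cancel h2) ▸ Nat.dvd_add h3 dvd_rfl) hd
      · ring
      · ring

lemma G_inv (k : ℕ) (hk : 1 ≤ k) : (1 - X ^ k : PowerSeries ℚ)⁻¹ = G k :=
  inv_of_mul_eq_one (one_sub_pow_mul_G k hk)

end SPTAux

open SPTAux in
/-- Σ_{n≥0} (1/(q;q)_∞ − 1/(q;q)_n) = (1/(q;q)_∞) Σ_{n≥1} q^n/(1−q^n) -/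
theorem stmt0 : seriesSum (fun n => qInf⁻¹ - (qPoch n)⁻¹) = qInf⁻¹ * divSum := by
  ext N
  rw [seriesSum, PowerSeries.coeff_mk]
  have hL : ∀ n ∈ range (N + 1), (coeff N) (qInf⁻¹ - (qPoch n)⁻¹)
      = (pp N : ℚ) - (B n N : ℚ) := by
    intro n _
    rw [map_sub, coeff_qInf_inv, coeff_qPoch_inv]
  rw [Finset.sum_congr rfl hL, PowerSeries.coeff_mul]
  have hR : ∀ jk ∈ Finset.HasAntidiagonal.antidiagonal N,
      (coeff jk.1) qInf⁻¹ * (coeff jk.2) divSum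
        = (pp jk.1 : ℚ) * ∑ n ∈ range (N + 1), (indm (n + 1) jk.2 : ℚ) := by
    intro jk hjk
    have hsum := Finset.HasAntidiagonal.mem_antidiagonal.mp hjk
    rw [coeff_qInf_inv]
    congr 1
    rw [divSum, seriesSum, PowerSeries.coeff_mk]
    have hext : ∑ n ∈ range (jk.2 + 1), (coeff jk.2) (X ^ (n + 1) * (1 - X ^ (n + 1))⁻¹ : PowerSeries ℚ)
        = ∑ n ∈ range (N + 1), (coeff jk.2) (X ^ (n + 1) * (1 - X ^ (n + 1))⁻¹ : PowerSeries ℚ) := by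
      apply Finset.sum_subset (Finset.range_subset_range.mpr (by omega))
      intro n _ hn
      rw [Finset.mem_range] at hn
      rw [PowerSeries.coeff_X_pow_mul', if_neg (by omega)]
    rw [hext]
    apply Finset.sum_congr rfl
    intro n _
    rw [G_inv (n + 1) (by omega), PowerSeries.coeff_X_pow_mul', indm]
    by_cases h1 : n + 1 ≤ jk.2
    · rw [if_pos h1, G, PowerSeries.coeff_mk]
      by_cases h2 : (n + 1) ∣ jk.2
      · rw [if_pos (Nat.dvd_sub h2 dvd_rfl), if_pos ⟨h1, h2⟩]
        norm_num
      · have hnd : ¬ (n + 1) ∣ jk.2 - (n + 1) := by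
          intro hc
          apply h2
          have h4 := Nat.sub_add_cancel h1
          exact h4 ▸ Nat.dvd_add hc dvd_rfl
        rw [if_neg hnd, if_neg (by tauto)]
        norm_num
    · rw [if_neg h1, if_neg (by tauto)]
      norm_num
  rw [Finset.sum_congr rfl hR]
  have hb := bridge N
  have hb' := congrArg (Nat.cast : ℕ → ℚ) hb
  push_cast at hb'
  rw [Finset.sum_sub_distrib, Finset.sum_const, Finset.card_range, nsmul_eq_mul]
  push_cast
  linarith
end
end

section
/- The number of divisors d(n) of a positive integer n equals the sum of the smallest parts of partitions of n into an odd number of distinct parts minus the sum of the smallest parts of partitions of n into an even number of distinct parts. -/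
open Finset PowerSeries

noncomputable section

namespace FFWaux


/-- `∏_{j=a}^{b} (1 - X^j)` -/
def PP (a b : ℕ) : PowerSeries ℚ := ∏ j ∈ Icc a b, (1 - X ^ j)

lemma coeff_PP (a b m : ℕ) :
    coeff m (PP a b) =
      ∑ T ∈ (Icc a b).powerset.filter (fun T => ∑ i ∈ T, i = m), (-1 : ℚ) ^ T.card := by
  have h1 : PP a b = ∑ T ∈ (Icc a b).powerset,
      (∏ i ∈ T, (-X ^ i : PowerSeries ℚ)) * ∏ i ∈ (Icc a b) \ T, (1 : PowerSeries ℚ) := by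
    rw [PP, ← Finset.prod_add]
    exact Finset.prod_congr rfl fun j _ => by ring
  rw [h1, map_sum, Finset.sum_filter]
  apply Finset.sum_congr rfl
  intro T _
  have h2 : ∏ i ∈ T, (-X ^ i : PowerSeries ℚ) =
      C ((-1 : ℚ) ^ T.card) * X ^ (∑ i ∈ T, i) := by
    have : ∀ i ∈ T, (-X ^ i : PowerSeries ℚ) = (-1) * X ^ i := fun i _ => by ring
    rw [Finset.prod_congr rfl this, Finset.prod_mul_distrib, Finset.prod_const,
      Finset.prod_pow_eq_pow_sum, map_pow, map_neg, map_one]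
  rw [h2, Finset.prod_const_one, mul_one, PowerSeries.coeff_C_mul, PowerSeries.coeff_X_pow]
  by_cases h : ∑ i ∈ T, i = m
  · simp [h]
  · simp [h, Ne.symm h]

lemma coeff_PP_small {a m : ℕ} (b : ℕ) (hm : m < a) :
    coeff m (PP a b) = if m = 0 then 1 else 0 := by
  rw [coeff_PP]
  rcases eq_or_ne m 0 with rfl | hm0
  · rw [if_pos rfl]
    have h : (Icc a b).powerset.filter (fun T => ∑ i ∈ T, i = 0) = {∅} := by
      ext T
      simp only [mem_filter, mem_powerset, mem_singleton]
      constructor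
      · rintro ⟨hsub, hsum⟩
        by_contra hne
        obtain ⟨x, hx⟩ := Finset.nonempty_iff_ne_empty.2 hne
        have hxa : a ≤ x := (Finset.mem_Icc.1 (hsub hx)).1
        have hxs : x ≤ ∑ i ∈ T, i :=
          Finset.single_le_sum (f := fun i => i) (fun _ _ => Nat.zero_le _) hx
        omega
      · rintro rfl
        exact ⟨Finset.empty_subset _, rfl⟩
    rw [h, Finset.sum_singleton, Finset.card_empty, pow_zero]
  · rw [if_neg hm0]
    have h : (Icc a b).powerset.filter (fun T => ∑ i ∈ T, i = m) = ∅ := by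
      ext T
      simp only [mem_filter, mem_powerset, Finset.notMem_empty, iff_false, not_and]
      intro hsub hsum
      rcases T.eq_empty_or_nonempty with rfl | ⟨x, hx⟩
      · simp at hsum; omega
      · have hxa : a ≤ x := (Finset.mem_Icc.1 (hsub hx)).1
        have hxs : x ≤ ∑ i ∈ T, i :=
          Finset.single_le_sum (f := fun i => i) (fun _ _ => Nat.zero_le _) hx
        omega
    rw [h, Finset.sum_empty]

lemma coeff_PP_trunc {a b b' n : ℕ} (hb : n ≤ b) (hb' : n ≤ b') :
    coeff n (PP a b) = coeff n (PP a b') := by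
  rw [coeff_PP, coeff_PP]
  have key : ∀ {c c' : ℕ}, n ≤ c → n ≤ c' →
      ∀ T ∈ (Icc a c).powerset.filter (fun T => ∑ i ∈ T, i = n),
        T ∈ (Icc a c').powerset.filter (fun T => ∑ i ∈ T, i = n) := by
    intro c c' hc hc' T hT
    obtain ⟨hsub, hsum⟩ := Finset.mem_filter.1 hT
    rw [Finset.mem_powerset] at hsub
    refine Finset.mem_filter.2 ⟨Finset.mem_powerset.2 fun x hx => ?_, hsum⟩
    have h1 := Finset.mem_Icc.1 (hsub hx)
    have hxs : x ≤ ∑ i ∈ T, i :=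
      Finset.single_le_sum (f := fun i => i) (fun _ _ => Nat.zero_le _) hx
    exact Finset.mem_Icc.2 ⟨h1.1, by omega⟩
  have hset : (Icc a b).powerset.filter (fun T => ∑ i ∈ T, i = n)
      = (Icc a b').powerset.filter (fun T => ∑ i ∈ T, i = n) :=
    Finset.Subset.antisymm (fun T hT => key hb hb' T hT) (fun T hT => key hb' hb T hT)
  rw [hset]

/-! ### seriesSum lemmas -/

def Ord (f : ℕ → PowerSeries ℚ) : Prop := ∀ ⦃t m : ℕ⦄, m < t → coeff m (f t) = 0

lemma coeff_seriesSum (f : ℕ → PowerSeries ℚ) (m : ℕ) :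
    coeff m (seriesSum f) = ∑ t ∈ range (m + 1), coeff m (f t) :=
  coeff_mk _ _

lemma seriesSum_add (f g : ℕ → PowerSeries ℚ) :
    seriesSum (fun t => f t + g t) = seriesSum f + seriesSum g := by
  ext m
  simp [coeff_seriesSum, Finset.sum_add_distrib]

lemma seriesSum_sub (f g : ℕ → PowerSeries ℚ) :
    seriesSum (fun t => f t - g t) = seriesSum f - seriesSum g := by
  ext m
  simp [coeff_seriesSum, Finset.sum_sub_distrib]

lemma mul_seriesSum (f : ℕ → PowerSeries ℚ) (hf : Ord f) (g : PowerSeries ℚ) :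
    g * seriesSum f = seriesSum (fun t => g * f t) := by
  ext m
  rw [coeff_seriesSum, PowerSeries.coeff_mul]
  have h1 : ∀ p ∈ antidiagonal m,
      coeff p.1 g * coeff p.2 (seriesSum f)
        = ∑ t ∈ range (m + 1), coeff p.1 g * coeff p.2 (f t) := by
    intro p hp
    rw [coeff_seriesSum, Finset.mul_sum]
    apply Finset.sum_subset
    · intro t ht
      rw [Finset.mem_range] at ht ⊢
      have := Finset.HasAntidiagonal.antidiagonal.snd_le hp
      omega
    · intro t _ hnt
      rw [Finset.mem_range] at hnt
      rw [hf (by omega), mul_zero]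
  rw [Finset.sum_congr rfl h1, Finset.sum_comm]
  exact Finset.sum_congr rfl fun t _ => (PowerSeries.coeff_mul _ _ _).symm

lemma seriesSum_shift (f : ℕ → PowerSeries ℚ) (hf : Ord f) :
    seriesSum f = f 0 + seriesSum (fun t => f (t + 1)) := by
  ext m
  rw [map_add, coeff_seriesSum, coeff_seriesSum, Finset.sum_range_succ' (fun t => coeff m (f t)),
    Finset.sum_range_succ (fun t => coeff m (f (t + 1)))]
  rw [hf (by omega : m < m + 1)]
  ring

def Sser (r : ℕ) : PowerSeries ℚ := seriesSum (fun t => X ^ t * PP (t + 1) (t + r))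
def Dser (r : ℕ) : PowerSeries ℚ := seriesSum (fun t => X ^ (2 * t) * PP (t + 1) (t + r))

lemma ord_xpow_mul (c : ℕ → ℕ) (hc : ∀ t, t ≤ c t) (w : ℕ → PowerSeries ℚ) :
    Ord (fun t => X ^ (c t) * w t) := by
  intro t m hm
  rw [PowerSeries.coeff_X_pow_mul', if_neg (by have := hc t; omega)]

lemma ord_S (r : ℕ) : Ord (fun t => X ^ t * PP (t + 1) (t + r)) :=
  ord_xpow_mul _ (fun t => le_refl t) _

lemma ord_D (r : ℕ) : Ord (fun t => X ^ (2 * t) * PP (t + 1) (t + r)) :=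
  ord_xpow_mul _ (fun t => by omega) _

lemma peel_top (a b : ℕ) (h : a ≤ b + 1) :
    PP a (b + 1) = PP a b * (1 - X ^ (b + 1)) := by
  rw [PP, PP, Finset.prod_Icc_succ_top h]

lemma peel_bot (t r : ℕ) :
    PP t (t + r) = (1 - X ^ t) * PP (t + 1) (t + r) := by
  rw [PP, PP, ← Finset.Ico_add_one_right_eq_Icc, ← Finset.Ico_add_one_right_eq_Icc,
    Finset.prod_eq_prod_Ico_succ_bot (by omega : t < t + r + 1)]

lemma xpow_merge (s u v : ℕ) (h : s + u = v) :
    (X : PowerSeries ℚ) ^ s * X ^ u = X ^ v := by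
  rw [← pow_add, h]

lemma R1 (r : ℕ) : Sser (r + 1) = Sser r - X ^ (r + 1) * Dser r := by
  have hterm : (fun t => X ^ t * PP (t + 1) (t + (r + 1)))
      = fun t => X ^ t * PP (t + 1) (t + r)
          - X ^ (r + 1) * (X ^ (2 * t) * PP (t + 1) (t + r)) := by
    funext t
    have h1 : PP (t + 1) (t + (r + 1)) = PP (t + 1) (t + r) * (1 - X ^ (t + r + 1)) := by
      rw [show t + (r + 1) = (t + r) + 1 by ring, peel_top (t + 1) (t + r) (by omega)]
    rw [h1]
    have h2 : (X : PowerSeries ℚ) ^ t * X ^ (t + r + 1) = X ^ (r + 1) * X ^ (2 * t) := by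
      rw [xpow_merge _ _ _ rfl, xpow_merge _ _ _ rfl]
      congr 1
      ring
    calc X ^ t * (PP (t + 1) (t + r) * (1 - X ^ (t + r + 1)))
        = X ^ t * PP (t + 1) (t + r) - (X ^ t * X ^ (t + r + 1)) * PP (t + 1) (t + r) := by ring
      _ = X ^ t * PP (t + 1) (t + r) - X ^ (r + 1) * (X ^ (2 * t) * PP (t + 1) (t + r)) := by
          rw [h2]; ring
  rw [Sser, hterm, seriesSum_sub, ← mul_seriesSum _ (ord_D r)]
  rfl

lemma R2 (r : ℕ) : X * Sser (r + 1) = Sser r - Dser r := by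
  have hOrd : Ord (fun u => X ^ u * PP u (u + r)) := ord_xpow_mul _ (fun t => le_refl t) _
  have hzero : (X : PowerSeries ℚ) ^ 0 * PP 0 (0 + r) = 0 := by
    rw [pow_zero, one_mul, PP]
    apply Finset.prod_eq_zero (Finset.mem_Icc.2 ⟨le_refl 0, Nat.zero_le _⟩)
    simp
  have e2 : (fun t => (X : PowerSeries ℚ) ^ (t + 1) * PP (t + 1) (t + 1 + r))
      = fun t => X * (X ^ t * PP (t + 1) (t + (r + 1))) := by
    funext t
    rw [show t + 1 + r = t + (r + 1) by ring, ← mul_assoc, ← pow_succ']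
  have e1 : seriesSum (fun u => X ^ u * PP u (u + r))
      = X * Sser (r + 1) := by
    rw [seriesSum_shift _ hOrd, hzero, zero_add, e2, Sser, ← mul_seriesSum _ (ord_S (r + 1))]
  have h3 : (fun u => (X : PowerSeries ℚ) ^ u * PP u (u + r))
      = fun u => X ^ u * PP (u + 1) (u + r) - X ^ (2 * u) * PP (u + 1) (u + r) := by
    funext u
    rw [peel_bot]
    have h4 : (X : PowerSeries ℚ) ^ u * X ^ u = X ^ (2 * u) := xpow_merge _ _ _ (by ring)
    calc (X:PowerSeries ℚ) ^ u * ((1 - X ^ u) * PP (u + 1) (u + r))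
        = X ^ u * PP (u + 1) (u + r) - (X ^ u * X ^ u) * PP (u + 1) (u + r) := by ring
      _ = X ^ u * PP (u + 1) (u + r) - X ^ (2 * u) * PP (u + 1) (u + r) := by rw [h4]
  rw [← e1, h3, seriesSum_sub]
  rfl

lemma key_S : ∀ r, (1 - X ^ (r + 1)) * Sser r = 1 := by
  intro r
  induction r with
  | zero =>
    have h2 : (1 - X : PowerSeries ℚ) * Sser 0
        = seriesSum (fun t => (1 - X) * (X ^ t * PP (t + 1) (t + 0))) :=
      mul_seriesSum _ (ord_S 0) _
    have h3 : (fun t => ((1 : PowerSeries ℚ) - X) * (X ^ t * PP (t + 1) (t + 0)))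
        = fun t => X ^ t - X ^ (t + 1) := by
      funext t
      rw [PP, Finset.Icc_eq_empty (by omega), Finset.prod_empty, mul_one]
      ring
    rw [pow_one, h2, h3]
    ext m
    rw [coeff_seriesSum]
    have h4 : ∀ t, coeff m ((X : PowerSeries ℚ) ^ t - X ^ (t + 1))
        = (if m = t then 1 else 0) - (if m = t + 1 then 1 else 0) := by
      intro t
      rw [map_sub, PowerSeries.coeff_X_pow, PowerSeries.coeff_X_pow]
    rw [Finset.sum_congr rfl fun t _ => h4 t, Finset.sum_sub_distrib]
    have h5 : ∑ t ∈ range (m + 1), (if m = t then (1:ℚ) else 0) = 1 := by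
      rw [Finset.sum_ite_eq (range (m + 1)) m (fun _ => (1:ℚ))]
      simp
    have h6 : ∑ t ∈ range (m + 1), (if m = t + 1 then (1:ℚ) else 0)
        = if m = 0 then 0 else 1 := by
      rcases eq_or_ne m 0 with rfl | hm
      · simp
      · rw [if_neg hm]
        obtain ⟨m', rfl⟩ := Nat.exists_eq_succ_of_ne_zero hm
        have hcong : ∀ t ∈ range (m' + 1 + 1), (if m' + 1 = t + 1 then (1:ℚ) else 0)
            = if m' = t then (1:ℚ) else 0 := by
          intro t _
          exact if_congr (by omega) rfl rfl
        rw [Finset.sum_congr rfl hcong, Finset.sum_ite_eq (range (m' + 1 + 1)) m' (fun _ => (1:ℚ))]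
        simp only [Finset.mem_range, if_pos (by omega : m' < m' + 1 + 1)]
    rw [h5, h6]
    rcases eq_or_ne m 0 with rfl | hm
    · simp
    · simp [hm, PowerSeries.coeff_one]
  | succ r ih =>
    have e1 : (1 - X ^ (r + 1 + 1)) * Sser (r + 1)
        = Sser (r + 1) - X ^ (r + 1) * (X * Sser (r + 1)) := by ring
    rw [e1, R2, R1]
    linear_combination ih

/-! ### the geometric-type series -/

def Geo (k : ℕ) : PowerSeries ℚ := PowerSeries.mk fun m => if k ∣ m ∧ m ≠ 0 then 1 else 0

lemma geo_mul {k : ℕ} (hk : k ≠ 0) : (1 - X ^ k) * Geo k = X ^ k := by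
  ext m
  rw [sub_mul, one_mul, map_sub, PowerSeries.coeff_X_pow_mul', PowerSeries.coeff_X_pow,
    Geo, coeff_mk]
  by_cases hkm : k ≤ m
  · rw [if_pos hkm, coeff_mk]
    rcases eq_or_ne m k with rfl | hne
    · simp [hk, Nat.sub_self]
    · have hmk : k < m := lt_of_le_of_ne hkm (Ne.symm hne)
      have hiff : k ∣ m ↔ k ∣ (m - k) := by
        constructor
        · intro h
          exact Nat.dvd_sub h dvd_rfl
        · intro h
          have h2 : m - k + k = m := Nat.sub_add_cancel hkm
          exact h2 ▸ Nat.dvd_add h dvd_rfl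
      have hne0 : m - k ≠ 0 := by omega
      have hm0 : m ≠ 0 := by omega
      by_cases hd : k ∣ m
      · simp [hd, hiff.mp hd, hne0, hm0, hne]
      · rw [if_neg (fun h : k ∣ m ∧ m ≠ 0 => hd h.1),
          if_neg (fun h : k ∣ (m - k) ∧ m - k ≠ 0 => hd (hiff.mpr h.1)), if_neg hne, sub_zero]
  · rw [if_neg hkm]
    have h1 : ¬ (k ∣ m ∧ m ≠ 0) := by
      rintro ⟨hd, h0⟩
      exact hkm (Nat.le_of_dvd (Nat.pos_of_ne_zero h0) hd)
    rw [if_neg h1, if_neg (by omega : m ≠ k), sub_zero]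

lemma cancel_unit {A B : PowerSeries ℚ} {k : ℕ} (hk : k ≠ 0)
    (h : (1 - X ^ k) * A = (1 - X ^ k) * B) : A = B := by
  have hc : constantCoeff ((1 : PowerSeries ℚ) - X ^ k) ≠ 0 := by
    rw [map_sub, map_one, map_pow, PowerSeries.constantCoeff_X, zero_pow hk, sub_zero]
    norm_num
  have h2 := congrArg (fun z => ((1 : PowerSeries ℚ) - X ^ k)⁻¹ * z) h
  simpa [← mul_assoc, PowerSeries.inv_mul_cancel _ hc] using h2

lemma geo_eq (r : ℕ) : X ^ (r + 1) * Sser r = Geo (r + 1) := by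
  apply cancel_unit (k := r + 1) (by omega)
  rw [geo_mul (by omega : r + 1 ≠ 0)]
  calc (1 - X ^ (r + 1)) * (X ^ (r + 1) * Sser r)
      = X ^ (r + 1) * ((1 - X ^ (r + 1)) * Sser r) := by ring
    _ = X ^ (r + 1) := by rw [key_S r, mul_one]

/-! ### the series T_N -/

def Tser (N : ℕ) : PowerSeries ℚ := seriesSum (fun t => 1 - PP (t + 1) (t + N))

lemma T_zero : Tser 0 = 0 := by
  have h : (fun t => (1 : PowerSeries ℚ) - PP (t + 1) (t + 0)) = fun _ => 0 := by
    funext t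
    rw [PP, Finset.Icc_eq_empty (by omega), Finset.prod_empty, sub_self]
  rw [Tser, h]
  ext m
  rw [coeff_seriesSum]
  simp

lemma T_succ (N : ℕ) : Tser (N + 1) = Tser N + Geo (N + 1) := by
  have hterm : (fun t => (1 : PowerSeries ℚ) - PP (t + 1) (t + (N + 1)))
      = fun t => (1 - PP (t + 1) (t + N)) + X ^ (N + 1) * (X ^ t * PP (t + 1) (t + N)) := by
    funext t
    have hp : PP (t + 1) (t + (N + 1)) = PP (t + 1) (t + N) * (1 - X ^ (t + N + 1)) := by
      rw [show t + (N + 1) = (t + N) + 1 by ring, peel_top (t + 1) (t + N) (by omega)]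
    have hx : (X : PowerSeries ℚ) ^ (N + 1) * X ^ t = X ^ (t + N + 1) :=
      xpow_merge _ _ _ (by ring)
    rw [hp]
    calc (1 : PowerSeries ℚ) - PP (t + 1) (t + N) * (1 - X ^ (t + N + 1))
        = (1 - PP (t + 1) (t + N)) + X ^ (t + N + 1) * PP (t + 1) (t + N) := by ring
      _ = (1 - PP (t + 1) (t + N)) + X ^ (N + 1) * (X ^ t * PP (t + 1) (t + N)) := by
          rw [← hx]; ring
  rw [Tser, hterm, seriesSum_add, ← Tser, ← mul_seriesSum _ (ord_S N), ← Sser, geo_eq N]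

lemma T_eq (N : ℕ) : Tser N = ∑ k ∈ Icc 1 N, Geo k := by
  induction N with
  | zero => simp [T_zero]
  | succ n ih => rw [T_succ, ih, Finset.sum_Icc_succ_top (by omega : 1 ≤ n + 1)]

/-! ### coefficient extraction -/

lemma coeff_T_divisors (n : ℕ) (hn : 0 < n) :
    coeff n (Tser n) = ((n.divisors.card : ℕ) : ℚ) := by
  rw [T_eq, map_sum]
  have h1 : ∀ k ∈ Icc 1 n, coeff n (Geo k) = if k ∣ n then (1:ℚ) else 0 := by
    intro k _
    rw [Geo, coeff_mk]
    exact if_congr (by simp [hn.ne']) rfl rfl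
  rw [Finset.sum_congr rfl h1, Finset.sum_boole]
  have h2 : (Icc 1 n).filter (fun k => k ∣ n) = n.divisors := by
    ext x
    rw [Finset.mem_filter, Nat.mem_divisors, Finset.mem_Icc]
    constructor
    · rintro ⟨_, hd⟩
      exact ⟨hd, hn.ne'⟩
    · rintro ⟨hd, _⟩
      have hx0 : x ≠ 0 := by
        rintro rfl
        rw [Nat.zero_dvd] at hd
        omega
      exact ⟨⟨by omega, Nat.le_of_dvd hn hd⟩, hd⟩
  rw [h2]

lemma coeff_T_left (n : ℕ) (hn : 0 < n) :
    coeff n (Tser n) = - ∑ s ∈ Icc 1 n, coeff n (PP s n) := by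
  rw [Tser, coeff_seriesSum]
  have h1 : ∀ t ∈ range (n + 1), coeff n ((1 : PowerSeries ℚ) - PP (t + 1) (t + n))
      = - coeff n (PP (t + 1) n) := by
    intro t _
    rw [map_sub, PowerSeries.coeff_one, if_neg hn.ne', zero_sub,
      coeff_PP_trunc (by omega : n ≤ t + n) (le_refl n)]
  rw [Finset.sum_congr rfl h1, Finset.sum_neg_distrib, neg_inj]
  rw [Finset.sum_range_succ]
  have htop : coeff n (PP (n + 1) n) = 0 := by
    rw [coeff_PP_small n (by omega), if_neg hn.ne']
  rw [htop, add_zero]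
  rw [show Icc 1 n = Ico 1 (n + 1) by rw [Finset.Ico_add_one_right_eq_Icc], Finset.sum_Ico_eq_sum_range]
  simp [add_comm]

/-- the weight used on the combinatorial side -/
def wgt (c s : ℕ) : ℤ := (-1) ^ (c + 1) * (s : ℤ)

lemma step1 (n : ℕ) :
    ((∑ l ∈ (univ : Finset (Nat.Partition n)).filter
        (fun l => l.parts.Nodup ∧ Odd (Multiset.card l.parts)), (smallestPart l : ℤ)) -
      ∑ l ∈ (univ : Finset (Nat.Partition n)).filter
        (fun l => l.parts.Nodup ∧ Even (Multiset.card l.parts)), (smallestPart l : ℤ))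
    = ∑ l ∈ (univ : Finset (Nat.Partition n)).filter (fun l => l.parts.Nodup),
        wgt (Multiset.card l.parts) (smallestPart l) := by
  rw [← Finset.filter_filter (fun l : Nat.Partition n => l.parts.Nodup)
      (fun l => Odd (Multiset.card l.parts)),
    ← Finset.filter_filter (fun l : Nat.Partition n => l.parts.Nodup)
      (fun l => Even (Multiset.card l.parts))]
  rw [← Finset.sum_filter_add_sum_filter_not
    ((univ : Finset (Nat.Partition n)).filter (fun l => l.parts.Nodup))
    (fun l => Odd (Multiset.card l.parts))
    (fun l => wgt (Multiset.card l.parts) (smallestPart l))]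
  have h1 : ∀ l ∈ ((univ : Finset (Nat.Partition n)).filter
      (fun l => l.parts.Nodup)).filter (fun l => Odd (Multiset.card l.parts)),
      wgt (Multiset.card l.parts) (smallestPart l) = (smallestPart l : ℤ) := by
    intro l hl
    have hodd : Odd (Multiset.card l.parts) := (Finset.mem_filter.1 hl).2
    rw [wgt, Odd.add_one hodd |>.neg_one_pow, one_mul]
  have h2 : ∀ l ∈ ((univ : Finset (Nat.Partition n)).filter
      (fun l => l.parts.Nodup)).filter (fun l => ¬ Odd (Multiset.card l.parts)),
      wgt (Multiset.card l.parts) (smallestPart l) = -(smallestPart l : ℤ) := by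
    intro l hl
    have heven : Even (Multiset.card l.parts) :=
      Nat.not_odd_iff_even.1 (Finset.mem_filter.1 hl).2
    rw [wgt, Odd.neg_one_pow (by simpa using heven.add_one), neg_one_mul]
  rw [Finset.sum_congr rfl h1, Finset.sum_congr rfl h2]
  have h3 : ((univ : Finset (Nat.Partition n)).filter
      (fun l => l.parts.Nodup)).filter (fun l => ¬ Odd (Multiset.card l.parts))
      = ((univ : Finset (Nat.Partition n)).filter
      (fun l => l.parts.Nodup)).filter (fun l => Even (Multiset.card l.parts)) := by
    apply Finset.filter_congr
    intro l _
    simp [Nat.not_odd_iff_even]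
  rw [h3, Finset.sum_neg_distrib]
  ring

/-- the finset target -/
def Wset (n : ℕ) : Finset (Finset ℕ) :=
  (Icc 1 n).powerset.filter (fun T => ∑ i ∈ T, i = n)

lemma mem_multiset_le_sum {m : Multiset ℕ} {x : ℕ} (hx : x ∈ m) : x ≤ m.sum := by
  obtain ⟨m', rfl⟩ := Multiset.exists_cons_of_mem hx
  rw [Multiset.sum_cons]
  omega

lemma mem_Wset {n : ℕ} {T : Finset ℕ} :
    T ∈ Wset n ↔ T ⊆ Icc 1 n ∧ ∑ i ∈ T, i = n := by
  rw [Wset, Finset.mem_filter, Finset.mem_powerset]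

lemma val_sum (T : Finset ℕ) : T.val.sum = ∑ i ∈ T, i := by
  rw [Finset.sum_eq_multiset_sum, Multiset.map_id']

/-- partition associated to a finset of parts -/
def partOf (n : ℕ) (T : Finset ℕ) (hT : T ∈ Wset n) : Nat.Partition n where
  parts := T.val
  parts_pos := by
    intro i hi
    have hsub := (mem_Wset.1 hT).1
    have hiT : i ∈ T := hi
    exact (Finset.mem_Icc.1 (hsub hiT)).1
  parts_sum := by
    rw [val_sum]
    exact (mem_Wset.1 hT).2

lemma step2 (n : ℕ) :
    ∑ l ∈ (univ : Finset (Nat.Partition n)).filter (fun l => l.parts.Nodup),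
        wgt (Multiset.card l.parts) (smallestPart l)
    = ∑ T ∈ Wset n, wgt T.card (sInf {a | a ∈ T}) := by
  refine Finset.sum_bij'
    (fun (p : Nat.Partition n) (hp : p ∈ (univ : Finset (Nat.Partition n)).filter
      (fun l => l.parts.Nodup)) => (⟨p.parts, (Finset.mem_filter.1 hp).2⟩ : Finset ℕ))
    (fun T hT => partOf n T hT) ?_ ?_ ?_ ?_ ?_
  · intro p hp
    refine mem_Wset.2 ⟨?_, ?_⟩
    · intro x hx
      have hxp : x ∈ p.parts := hx
      refine Finset.mem_Icc.2 ⟨p.parts_pos hxp, ?_⟩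
      have h := mem_multiset_le_sum hxp
      rw [p.parts_sum] at h
      exact h
    · show ∑ i ∈ (⟨p.parts, _⟩ : Finset ℕ), i = n
      rw [← val_sum]
      exact p.parts_sum
  · intro T hT
    exact Finset.mem_filter.2 ⟨Finset.mem_univ _, T.nodup⟩
  · intro p hp
    rfl
  · intro T hT
    rfl
  · intro p hp
    rfl

/-- the signed subset count -/
def gZ (t n : ℕ) : ℤ :=
  ∑ T ∈ (Icc t n).powerset.filter (fun T => ∑ i ∈ T, i = n), (-1 : ℤ) ^ T.card

lemma step3 {n : ℕ} (hn : 0 < n) {T : Finset ℕ} (hT : T ∈ Wset n) :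
    ((sInf {a | a ∈ T} : ℕ) : ℤ)
      = ∑ t ∈ Icc 1 n, (if ∀ x ∈ T, t ≤ x then (1 : ℤ) else 0) := by
  obtain ⟨hsub, hsum⟩ := mem_Wset.1 hT
  have hne : T.Nonempty := by
    rcases T.eq_empty_or_nonempty with rfl | h
    · rw [Finset.sum_empty] at hsum
      omega
    · exact h
  obtain ⟨x0, hx0⟩ := hne
  have hsetne : {a | a ∈ T}.Nonempty := ⟨x0, hx0⟩
  set m0 := sInf {a | a ∈ T} with hm0
  have hm0T : m0 ∈ T := Nat.sInf_mem hsetne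
  have hm0n : m0 ∈ Icc 1 n := hsub hm0T
  rw [Finset.mem_Icc] at hm0n
  have hcond : ∀ t, (∀ x ∈ T, t ≤ x) ↔ t ≤ m0 := by
    intro t
    constructor
    · intro h
      exact h m0 hm0T
    · intro ht x hx
      exact ht.trans (Nat.sInf_le hx)
  calc ((m0 : ℕ) : ℤ)
      = ((Finset.filter (fun t => t ≤ m0) (Icc 1 n)).card : ℤ) := by
        have : Finset.filter (fun t => t ≤ m0) (Icc 1 n) = Icc 1 m0 := by
          ext t
          simp only [Finset.mem_filter, Finset.mem_Icc]
          omega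
        rw [this, Nat.card_Icc]
        simp
    _ = ∑ t ∈ Icc 1 n, (if t ≤ m0 then (1 : ℤ) else 0) := by
        rw [Finset.sum_boole]
    _ = ∑ t ∈ Icc 1 n, (if ∀ x ∈ T, t ≤ x then (1 : ℤ) else 0) :=
        Finset.sum_congr rfl fun t _ => (if_congr (hcond t) rfl rfl).symm

lemma step4 (n : ℕ) (hn : 0 < n) :
    ∑ T ∈ Wset n, wgt T.card (sInf {a | a ∈ T})
      = - ∑ t ∈ Icc 1 n, gZ t n := by
  have h1 : ∀ T ∈ Wset n, wgt T.card (sInf {a | a ∈ T})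
      = ∑ t ∈ Icc 1 n, (if ∀ x ∈ T, t ≤ x then ((-1 : ℤ) ^ (T.card + 1)) else 0) := by
    intro T hT
    rw [wgt, step3 hn hT, Finset.mul_sum]
    exact Finset.sum_congr rfl fun t _ => by
      rw [mul_ite, mul_one, mul_zero]
  rw [Finset.sum_congr rfl h1, Finset.sum_comm]
  rw [← Finset.sum_neg_distrib]
  apply Finset.sum_congr rfl
  intro t ht
  rw [Finset.mem_Icc] at ht
  rw [← Finset.sum_filter]
  have h2 : (Wset n).filter (fun T => ∀ x ∈ T, t ≤ x)
      = (Icc t n).powerset.filter (fun T => ∑ i ∈ T, i = n) := by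
    ext T
    rw [Finset.mem_filter, mem_Wset, Finset.mem_filter, Finset.mem_powerset]
    constructor
    · rintro ⟨⟨hsub, hsum⟩, hall⟩
      refine ⟨fun x hx => ?_, hsum⟩
      have h3 := Finset.mem_Icc.1 (hsub hx)
      exact Finset.mem_Icc.2 ⟨hall x hx, h3.2⟩
    · rintro ⟨hsub, hsum⟩
      refine ⟨⟨fun x hx => ?_, hsum⟩, fun x hx => (Finset.mem_Icc.1 (hsub hx)).1⟩
      have h3 := Finset.mem_Icc.1 (hsub hx)
      exact Finset.mem_Icc.2 ⟨by omega, h3.2⟩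
  rw [h2, gZ, ← Finset.sum_neg_distrib]
  apply Finset.sum_congr rfl
  intro T _
  rw [pow_succ]
  ring


lemma bridge (s n : ℕ) : coeff n (PP s n) = ((gZ s n : ℤ) : ℚ) := by
  rw [coeff_PP, gZ]
  push_cast
  rfl

end FFWaux

/-- d(n) equals the sum of smallest parts over partitions of n into an odd number of
distinct parts minus that over partitions into an even number of distinct parts. -/
theorem stmt1 (n : ℕ) (hn : 0 < n) :
    (d n : ℤ) =
      (∑ l ∈ (univ : Finset (Nat.Partition n)).filter
          (fun l => l.parts.Nodup ∧ Odd l.parts.card), (smallestPart l : ℤ)) -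
      ∑ l ∈ (univ : Finset (Nat.Partition n)).filter
          (fun l => l.parts.Nodup ∧ Even l.parts.card), (smallestPart l : ℤ) := by
  classical
  have hcomb :
      ((∑ l ∈ (univ : Finset (Nat.Partition n)).filter
          (fun l => l.parts.Nodup ∧ Odd l.parts.card), (smallestPart l : ℤ)) -
        ∑ l ∈ (univ : Finset (Nat.Partition n)).filter
          (fun l => l.parts.Nodup ∧ Even l.parts.card), (smallestPart l : ℤ))
      = - ∑ t ∈ Icc 1 n, FFWaux.gZ t n := by
    rw [FFWaux.step1 n, FFWaux.step2 n, FFWaux.step4 n hn]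
  have hana1 : coeff n (FFWaux.Tser n) = ((d n : ℕ) : ℚ) := FFWaux.coeff_T_divisors n hn
  have hana2 : coeff n (FFWaux.Tser n) = - ∑ s ∈ Icc 1 n, coeff n (FFWaux.PP s n) :=
    FFWaux.coeff_T_left n hn
  have hana3 : ((d n : ℕ) : ℚ) = ((- ∑ s ∈ Icc 1 n, FFWaux.gZ s n : ℤ) : ℚ) := by
    rw [← hana1, hana2]
    push_cast
    rw [Finset.sum_congr rfl fun s _ => FFWaux.bridge s n]
  have hfin : ((d n : ℕ) : ℤ) = - ∑ s ∈ Icc 1 n, FFWaux.gZ s n := by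
    exact_mod_cast hana3
  rw [hcomb, hfin]
end
end

section
/- As formal power series in q, Σ_{n≥1} p_2(n) q^n = (1/(q;q)_∞)·(Σ_{n≥1} q^n/(1−q^n))² + Σ_{n≥1} n·p(n) q^n, where p_2(n) = Σ_m m² p(m,n). -/
open Finset PowerSeries

noncomputable section

-- ===== Part C: combinatorial counting =====

/-- `pp (N - m)` if `m ≤ N`, else `0`. -/
def ppc (N m : ℕ) : ℕ := if m ≤ N then pp (N - m) else 0

lemma ppc_eq_zero {N m : ℕ} (h : N < m) : ppc N m = 0 := by
  simp [ppc, Nat.not_le.mpr h]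

lemma parts_mem_le {n : ℕ} (l : Nat.Partition n) {a : ℕ} (ha : a ∈ l.parts) : a ≤ n := by
  have := Multiset.single_le_sum (fun x _ => Nat.zero_le x) a ha
  simpa [l.parts_sum] using this

lemma parts_card_le {n : ℕ} (l : Nat.Partition n) : l.parts.card ≤ n := by
  have : l.parts.card * 1 ≤ l.parts.sum := by
    rw [mul_one]
    simpa using Multiset.card_nsmul_le_sum (fun a ha => l.parts_pos ha)
  simpa [l.parts_sum] using this

lemma parts_count_le {n : ℕ} (l : Nat.Partition n) (s : ℕ) : l.parts.count s ≤ n :=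
  le_trans (Multiset.count_le_card _ _) (parts_card_le l)

/-- The central bijection: partitions of `N` whose parts contain a fixed multiset `μ`
(of positive numbers) are counted by `pp (N - μ.sum)`. -/
lemma card_contains (N : ℕ) (μ : Multiset ℕ) (hμ : ∀ a ∈ μ, 0 < a) :
    ((univ : Finset (Nat.Partition N)).filter fun l => μ ≤ l.parts).card = ppc N μ.sum := by
  rw [ppc]
  split_ifs with h
  · have hcard : pp (N - μ.sum) = (univ : Finset (Nat.Partition (N - μ.sum))).card := by
      rw [pp, Finset.card_univ]
    rw [hcard]
    apply Finset.card_bij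
      (i := fun (l : Nat.Partition N) (hl : l ∈ (univ : Finset (Nat.Partition N)).filter
          fun l => μ ≤ l.parts) =>
        (⟨l.parts - μ,
          fun {a} (ha : a ∈ l.parts - μ) =>
            l.parts_pos (Multiset.mem_of_le (Multiset.sub_le_self _ _) ha),
          by
            have hle : μ ≤ l.parts := (Finset.mem_filter.mp hl).2
            have h1 : l.parts - μ + μ = l.parts := tsub_add_cancel_of_le hle
            have h2 : (l.parts - μ).sum + μ.sum = N := by
              rw [← Multiset.sum_add, h1, l.parts_sum]
            omega⟩ : Nat.Partition (N - μ.sum)))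
    · intro a ha; exact Finset.mem_univ _
    · intro l1 hl1 l2 hl2 hh
      have h1 : μ ≤ l1.parts := (Finset.mem_filter.mp hl1).2
      have h2 : μ ≤ l2.parts := (Finset.mem_filter.mp hl2).2
      have hparts : l1.parts - μ = l2.parts - μ := congrArg Nat.Partition.parts hh
      apply Nat.Partition.ext
      have e1 : l1.parts - μ + μ = l1.parts := tsub_add_cancel_of_le h1
      have e2 : l2.parts - μ + μ = l2.parts := tsub_add_cancel_of_le h2
      rw [← e1, ← e2, hparts]
    · intro m _
      refine ⟨⟨m.parts + μ, ?_, ?_⟩, ?_, ?_⟩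
      · intro a ha
        rcases Multiset.mem_add.mp ha with h' | h'
        · exact m.parts_pos h'
        · exact hμ a h'
      · rw [Multiset.sum_add, m.parts_sum]; omega
      · simp only [Finset.mem_filter, Finset.mem_univ, true_and]
        exact Multiset.le_add_left _ _
      · apply Nat.Partition.ext
        exact add_tsub_cancel_right _ _
  · rw [Finset.card_eq_zero]
    apply Finset.eq_empty_of_forall_notMem
    intro l hl
    have hle : μ ≤ l.parts := (Finset.mem_filter.mp hl).2
    rcases Multiset.le_iff_exists_add.mp hle with ⟨u, hu⟩
    have : l.parts.sum = μ.sum + u.sum := by rw [hu, Multiset.sum_add]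
    rw [l.parts_sum] at this
    omega

lemma card_count_ge (N s j : ℕ) (hs : 0 < s) :
    ((univ : Finset (Nat.Partition N)).filter fun l => j ≤ l.parts.count s).card
      = ppc N (s * j) := by
  have h1 : ∀ l : Nat.Partition N, (j ≤ l.parts.count s) ↔ Multiset.replicate j s ≤ l.parts :=
    fun l => Multiset.le_count_iff_replicate_le
  have h2 : (Multiset.replicate j s).sum = s * j := by
    rw [Multiset.sum_replicate, smul_eq_mul, mul_comm]
  rw [show ((univ : Finset (Nat.Partition N)).filter fun l => j ≤ l.parts.count s)
      = (univ : Finset (Nat.Partition N)).filter fun l => Multiset.replicate j s ≤ l.parts from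
      Finset.filter_congr fun l _ => by rw [h1 l]]
  rw [card_contains N _ (fun a ha => by rwa [Multiset.eq_of_mem_replicate ha]), h2]

lemma card_count_ge_two (N s1 j1 s2 j2 : ℕ) (hs1 : 0 < s1) (hs2 : 0 < s2) (hne : s1 ≠ s2) :
    ((univ : Finset (Nat.Partition N)).filter
        fun l => j1 ≤ l.parts.count s1 ∧ j2 ≤ l.parts.count s2).card
      = ppc N (s1 * j1 + s2 * j2) := by
  set μ : Multiset ℕ := Multiset.replicate j1 s1 + Multiset.replicate j2 s2 with hμdef
  have hsum : μ.sum = s1 * j1 + s2 * j2 := by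
    rw [hμdef, Multiset.sum_add, Multiset.sum_replicate, Multiset.sum_replicate,
      smul_eq_mul, smul_eq_mul, mul_comm j1 s1, mul_comm j2 s2]
  have hcond : ∀ l : Nat.Partition N,
      (j1 ≤ l.parts.count s1 ∧ j2 ≤ l.parts.count s2) ↔ μ ≤ l.parts := by
    intro l
    rw [Multiset.le_iff_count]
    constructor
    · rintro ⟨ha, hb⟩ a
      rw [hμdef, Multiset.count_add, Multiset.count_replicate, Multiset.count_replicate]
      split_ifs with hA hB hB
      · exact absurd (hA.trans hB.symm) hne
      · subst hA; omega
      · subst hB; omega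
      · simp
    · intro hcount
      constructor
      · have := hcount s1
        rw [hμdef, Multiset.count_add, Multiset.count_replicate, Multiset.count_replicate,
          if_pos rfl, if_neg (Ne.symm hne)] at this
        omega
      · have := hcount s2
        rw [hμdef, Multiset.count_add, Multiset.count_replicate, Multiset.count_replicate,
          if_neg hne, if_pos rfl] at this
        omega
  rw [show ((univ : Finset (Nat.Partition N)).filter
        fun l => j1 ≤ l.parts.count s1 ∧ j2 ≤ l.parts.count s2)
      = (univ : Finset (Nat.Partition N)).filter fun l => μ ≤ l.parts from
      Finset.filter_congr fun l _ => by rw [hcond l]]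
  rw [card_contains N μ, hsum]
  intro a ha
  rcases Multiset.mem_add.mp ha with h' | h' <;>
    · rw [Multiset.eq_of_mem_replicate h']; assumption
-- ===== summation helpers =====

lemma p2_eq_sum_sq (N : ℕ) :
    p2 N = ∑ l : Nat.Partition N, l.parts.card ^ 2 := by
  have hfib := Finset.sum_fiberwise_of_maps_to
      (s := (univ : Finset (Nat.Partition N))) (g := fun l : Nat.Partition N => l.parts.card) (t := range (N + 1))
      (fun l _ => Finset.mem_range.mpr (Nat.lt_succ_of_le (parts_card_le l)))
      (fun l => l.parts.card ^ 2)
  rw [p2, ← hfib]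
  apply Finset.sum_congr rfl
  intro m _
  refine Eq.symm ?_
  calc ∑ l ∈ ((univ : Finset (Nat.Partition N)).filter fun l => l.parts.card = m),
        l.parts.card ^ 2
      = ∑ _l ∈ ((univ : Finset (Nat.Partition N)).filter fun l => l.parts.card = m), m ^ 2 := by
        apply Finset.sum_congr rfl
        intro l hl
        rw [(Finset.mem_filter.mp hl).2]
    _ = m ^ 2 * pmn m N := by rw [Finset.sum_const, smul_eq_mul, mul_comm, pmn]

lemma count_eq_sum_ind (N : ℕ) (l : Nat.Partition N) (s : ℕ) :
    l.parts.count s = ∑ j ∈ Icc 1 N, (if j ≤ l.parts.count s then 1 else 0) := by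
  have hc : l.parts.count s ≤ N := parts_count_le l s
  rw [← Finset.sum_filter,
    show (Icc 1 N).filter (fun j => j ≤ l.parts.count s) = Icc 1 (l.parts.count s) from by
      ext j; simp only [Finset.mem_filter, Finset.mem_Icc]; omega,
    Finset.sum_const, smul_eq_mul, mul_one, Nat.card_Icc]
  omega

lemma card_eq_sum_counts (N : ℕ) (l : Nat.Partition N) :
    l.parts.card = ∑ s ∈ Icc 1 N, l.parts.count s := by
  rw [← Multiset.toFinset_sum_count_eq l.parts]
  apply Finset.sum_subset
  · intro s hs
    rw [Multiset.mem_toFinset] at hs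
    rw [Finset.mem_Icc]
    exact ⟨l.parts_pos hs, parts_mem_le l hs⟩
  · intro s _ hs
    rw [Multiset.mem_toFinset] at hs
    exact Multiset.count_eq_zero.mpr hs

lemma sum_eq_sum_counts (N : ℕ) (l : Nat.Partition N) :
    N = ∑ s ∈ Icc 1 N, s * l.parts.count s := by
  have hsub : l.parts.toFinset ⊆ Icc 1 N := by
    intro s hs
    rw [Multiset.mem_toFinset] at hs
    rw [Finset.mem_Icc]
    exact ⟨l.parts_pos hs, parts_mem_le l hs⟩
  calc N = l.parts.sum := l.parts_sum.symm
    _ = ∑ i ∈ Icc 1 N, l.parts.count i • i :=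
        Finset.sum_multiset_count_of_subset l.parts (Icc 1 N) hsub
    _ = ∑ s ∈ Icc 1 N, s * l.parts.count s := by
        apply Finset.sum_congr rfl
        intro s _
        rw [smul_eq_mul, mul_comm]
lemma card_mul_fiber (N m : ℕ) (hm : m ≤ N) :
    (((Icc 1 N) ×ˢ (Icc 1 N)).filter fun p => p.1 * p.2 = m).card = d m := by
  rcases Nat.eq_zero_or_pos m with rfl | hm0
  · rw [d, Nat.divisors_zero, Finset.card_empty, Finset.card_eq_zero]
    apply Finset.eq_empty_of_forall_notMem
    intro p hp
    rw [Finset.mem_filter, Finset.mem_product, Finset.mem_Icc, Finset.mem_Icc] at hp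
    have := hp.2
    have h1 := hp.1.1.1
    have h2 := hp.1.2.1
    nlinarith
  · rw [d]
    apply Finset.card_nbij (i := fun p => p.1)
    · intro p hp
      simp only [Finset.mem_coe, Finset.mem_filter] at hp
      simp only [Finset.mem_coe]
      rw [Nat.mem_divisors]
      exact ⟨⟨p.2, hp.2.symm⟩, hm0.ne'⟩
    · intro p hp q hq hpq
      simp only [Finset.mem_coe, Finset.mem_filter, Finset.mem_product, Finset.mem_Icc]
        at hp hq
      have hpq' : p.1 = q.1 := hpq
      have h1 : p.1 * p.2 = q.1 * q.2 := by rw [hp.2, hq.2]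
      rw [hpq'] at h1
      have h2 : p.2 = q.2 := Nat.eq_of_mul_eq_mul_left (by omega : 0 < q.1) h1
      exact Prod.ext hpq' h2
    · intro a ha
      simp only [Finset.mem_coe, Nat.mem_divisors] at ha
      have ha1 : 0 < a := Nat.pos_of_dvd_of_pos ha.1 hm0
      have ham : a ≤ m := Nat.le_of_dvd hm0 ha.1
      have hdiv : 0 < m / a := Nat.div_pos ham ha1
      have hdm : m / a ≤ m := Nat.div_le_self m a
      refine ⟨(a, m / a), ?_, rfl⟩
      simp only [Finset.mem_coe, Finset.mem_filter, Finset.mem_product, Finset.mem_Icc]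
      exact ⟨⟨⟨ha1, le_trans ham hm⟩, ⟨hdiv, le_trans hdm hm⟩⟩, Nat.mul_div_cancel' ha.1⟩

lemma card_add_fiber (N t : ℕ) (ht : t ≤ N) :
    (((Icc 1 N) ×ˢ (Icc 1 N)).filter fun p => p.1 + p.2 = t).card = t - 1 := by
  have : t - 1 = (Icc 1 (t - 1)).card := by rw [Nat.card_Icc]; omega
  rw [this]
  apply Finset.card_nbij (i := fun p => p.1)
  · intro p hp
    simp only [Finset.mem_coe, Finset.mem_filter, Finset.mem_product, Finset.mem_Icc] at hp
    simp only [Finset.mem_coe]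
    rw [Finset.mem_Icc]
    omega
  · intro p hp q hq hpq
    simp only [Finset.mem_coe, Finset.mem_filter, Finset.mem_product, Finset.mem_Icc] at hp hq
    have hpq' : p.1 = q.1 := hpq
    have : p.2 = q.2 := by omega
    exact Prod.ext hpq' this
  · intro a ha
    simp only [Finset.mem_coe, Finset.mem_Icc] at ha
    refine ⟨(a, t - a), ?_, rfl⟩
    simp only [Finset.mem_coe, Finset.mem_filter, Finset.mem_product, Finset.mem_Icc]
    omega

lemma sum_mul_fiber (N : ℕ) (W : ℕ → ℕ) (hW : ∀ m, N < m → W m = 0) :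
    ∑ s ∈ Icc 1 N, ∑ j ∈ Icc 1 N, W (s * j) = ∑ a ∈ range (N + 1), d a * W a := by
  rw [← Finset.sum_product' (s := Icc 1 N) (t := Icc 1 N) (f := fun s j => W (s * j))]
  have hmap : ∀ p ∈ (Icc 1 N) ×ˢ (Icc 1 N), p.1 * p.2 ∈ range (N * N + 1) := by
    intro p hp
    rw [Finset.mem_product, Finset.mem_Icc, Finset.mem_Icc] at hp
    rw [Finset.mem_range]
    have := Nat.mul_le_mul hp.1.2 hp.2.2
    omega
  have hfib := Finset.sum_fiberwise_of_maps_to (s := (Icc 1 N) ×ˢ (Icc 1 N))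
      (g := fun p : ℕ × ℕ => p.1 * p.2) (t := range (N * N + 1)) hmap
      (fun p => W (p.1 * p.2))
  rw [← hfib]
  have hsub : range (N + 1) ⊆ range (N * N + 1) := by
    apply Finset.range_subset_range.mpr
    nlinarith
  rw [← Finset.sum_subset hsub]
  · apply Finset.sum_congr rfl
    intro m hm
    rw [Finset.mem_range] at hm
    have hinner : ∑ p ∈ (((Icc 1 N) ×ˢ (Icc 1 N)).filter fun p => p.1 * p.2 = m),
        W (p.1 * p.2) = ∑ p ∈ (((Icc 1 N) ×ˢ (Icc 1 N)).filter fun p => p.1 * p.2 = m), W m := by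
      apply Finset.sum_congr rfl
      intro p hp
      rw [(Finset.mem_filter.mp hp).2]
    rw [hinner, Finset.sum_const, smul_eq_mul, card_mul_fiber N m (by omega)]
  · intro m hm hm'
    rw [Finset.mem_range] at hm hm'
    have : N < m := by omega
    have hz := hW m this
    apply Finset.sum_eq_zero
    intro p hp
    rw [(Finset.mem_filter.mp hp).2, hz]

lemma sum_add_fiber (N : ℕ) (W : ℕ → ℕ) (hW : ∀ m, N < m → W m = 0) :
    ∑ j1 ∈ Icc 1 N, ∑ j2 ∈ Icc 1 N, W (j1 + j2) = ∑ t ∈ range (N + 1), (t - 1) * W t := by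
  rw [← Finset.sum_product' (s := Icc 1 N) (t := Icc 1 N) (f := fun j1 j2 => W (j1 + j2))]
  have hmap : ∀ p ∈ (Icc 1 N) ×ˢ (Icc 1 N), p.1 + p.2 ∈ range (2 * N + 1) := by
    intro p hp
    rw [Finset.mem_product, Finset.mem_Icc, Finset.mem_Icc] at hp
    rw [Finset.mem_range]
    omega
  have hfib := Finset.sum_fiberwise_of_maps_to (s := (Icc 1 N) ×ˢ (Icc 1 N))
      (g := fun p : ℕ × ℕ => p.1 + p.2) (t := range (2 * N + 1)) hmap
      (fun p => W (p.1 + p.2))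
  rw [← hfib]
  have hsub : range (N + 1) ⊆ range (2 * N + 1) := by
    apply Finset.range_subset_range.mpr
    omega
  rw [← Finset.sum_subset hsub]
  · apply Finset.sum_congr rfl
    intro t ht
    rw [Finset.mem_range] at ht
    have hinner : ∑ p ∈ (((Icc 1 N) ×ˢ (Icc 1 N)).filter fun p => p.1 + p.2 = t),
        W (p.1 + p.2) = ∑ p ∈ (((Icc 1 N) ×ˢ (Icc 1 N)).filter fun p => p.1 + p.2 = t), W t := by
      apply Finset.sum_congr rfl
      intro p hp
      rw [(Finset.mem_filter.mp hp).2]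
    rw [hinner, Finset.sum_const, smul_eq_mul, card_add_fiber N t (by omega)]
  · intro t ht ht'
    rw [Finset.mem_range] at ht ht'
    have hz := hW t (by omega)
    apply Finset.sum_eq_zero
    intro p hp
    rw [(Finset.mem_filter.mp hp).2, hz]
lemma sum_le_fiber (N : ℕ) (W : ℕ → ℕ) :
    ∑ j1 ∈ Icc 1 N, ∑ j2 ∈ Icc 1 N, (if j2 ≤ j1 then W j1 else W j2)
      = (∑ j ∈ Icc 1 N, j * W j) + ∑ j ∈ Icc 1 N, (j - 1) * W j := by
  have step1 : ∀ j1 ∈ Icc 1 N, ∑ j2 ∈ Icc 1 N, (if j2 ≤ j1 then W j1 else W j2)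
      = j1 * W j1 + ∑ j2 ∈ Icc 1 N, (if j1 < j2 then W j2 else 0) := by
    intro j1 hj1
    rw [Finset.mem_Icc] at hj1
    rw [Finset.sum_ite]
    congr 1
    · rw [Finset.sum_const, smul_eq_mul,
        show (Icc 1 N).filter (fun j2 => j2 ≤ j1) = Icc 1 j1 from by
          ext j; simp only [Finset.mem_filter, Finset.mem_Icc]; omega,
        Nat.card_Icc]
      simp
    · rw [Finset.sum_filter]
      apply Finset.sum_congr rfl
      intro j2 _
      congr 1
      simp only [not_le]
  rw [Finset.sum_congr rfl step1, Finset.sum_add_distrib]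
  congr 1
  rw [Finset.sum_comm]
  apply Finset.sum_congr rfl
  intro j2 hj2
  rw [Finset.mem_Icc] at hj2
  rw [← Finset.sum_filter,
    show (Icc 1 N).filter (fun j1 => j1 < j2) = Icc 1 (j2 - 1) from by
      ext j; simp only [Finset.mem_filter, Finset.mem_Icc]; omega,
    Finset.sum_const, smul_eq_mul, Nat.card_Icc]
  simp

lemma Npp_eq (N : ℕ) :
    N * pp N = ∑ s ∈ Icc 1 N, ∑ j ∈ Icc 1 N, s * ppc N (s * j) := by
  have h1 : N * pp N = ∑ _l : Nat.Partition N, N := by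
    rw [Finset.sum_const, Finset.card_univ, pp, smul_eq_mul, mul_comm]
  rw [h1, Finset.sum_congr rfl (fun l (_ : l ∈ univ) => sum_eq_sum_counts N l),
    Finset.sum_comm]
  apply Finset.sum_congr rfl
  intro s hs
  rw [Finset.mem_Icc] at hs
  rw [← Finset.mul_sum, ← Finset.mul_sum]
  congr 1
  rw [Finset.sum_congr rfl (fun l (_ : l ∈ univ) => count_eq_sum_ind N l s),
    Finset.sum_comm]
  apply Finset.sum_congr rfl
  intro j _
  rw [← Finset.card_filter]
  exact card_count_ge N s j (by omega)
def Cpair (N s1 j1 s2 j2 : ℕ) : ℕ :=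
  ((univ : Finset (Nat.Partition N)).filter
    fun l => j1 ≤ l.parts.count s1 ∧ j2 ≤ l.parts.count s2).card

lemma Cpair_diag (N s j1 j2 : ℕ) (hs : 0 < s) :
    Cpair N s j1 s j2 = if j2 ≤ j1 then ppc N (s * j1) else ppc N (s * j2) := by
  rw [Cpair]
  split_ifs with h
  · rw [Finset.filter_congr (q := fun l => j1 ≤ l.parts.count s)
      (fun l _ => ⟨fun hh => hh.1, fun hh => ⟨hh, le_trans h hh⟩⟩)]
    exact card_count_ge N s j1 hs
  · push_neg at h
    rw [Finset.filter_congr (q := fun l => j2 ≤ l.parts.count s)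
      (fun l _ => ⟨fun hh => hh.2, fun hh => ⟨le_trans (le_of_lt h) hh, hh⟩⟩)]
    exact card_count_ge N s j2 hs

lemma Cpair_off (N s1 j1 s2 j2 : ℕ) (h1 : 0 < s1) (h2 : 0 < s2) (hne : s1 ≠ s2) :
    Cpair N s1 j1 s2 j2 = ppc N (s1 * j1 + s2 * j2) :=
  card_count_ge_two N s1 j1 s2 j2 h1 h2 hne

set_option maxHeartbeats 1000000 in
lemma key (N : ℕ) :
    p2 N = (∑ a ∈ range (N + 1), ∑ b ∈ range (N + 1), d a * d b * ppc N (a + b))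
      + N * pp N := by
  have stepA : p2 N = ∑ s1 ∈ Icc 1 N, ∑ s2 ∈ Icc 1 N, ∑ j1 ∈ Icc 1 N, ∑ j2 ∈ Icc 1 N,
      Cpair N s1 j1 s2 j2 := by
    rw [p2_eq_sum_sq]
    have hcard : ∀ l : Nat.Partition N, l.parts.card ^ 2
        = ∑ p ∈ (Icc 1 N) ×ˢ (Icc 1 N), ∑ q ∈ (Icc 1 N) ×ˢ (Icc 1 N),
            ((if p.2 ≤ l.parts.count p.1 then 1 else 0) *
              (if q.2 ≤ l.parts.count q.1 then 1 else 0) : ℕ) := by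
      intro l
      have hc : l.parts.card = ∑ p ∈ (Icc 1 N) ×ˢ (Icc 1 N),
          (if p.2 ≤ l.parts.count p.1 then (1 : ℕ) else 0) := by
        rw [Finset.sum_product' (f := fun s j => if j ≤ l.parts.count s then (1 : ℕ) else 0),
          card_eq_sum_counts N l]
        exact Finset.sum_congr rfl fun s _ => count_eq_sum_ind N l s
      rw [pow_two, hc, Finset.sum_mul_sum]
    rw [Finset.sum_congr rfl (fun l _ => hcard l), Finset.sum_comm]
    have hswap : ∀ p : ℕ × ℕ, ∑ l : Nat.Partition N, ∑ q ∈ (Icc 1 N) ×ˢ (Icc 1 N),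
          ((if p.2 ≤ l.parts.count p.1 then 1 else 0) *
            (if q.2 ≤ l.parts.count q.1 then 1 else 0) : ℕ)
        = ∑ q ∈ (Icc 1 N) ×ˢ (Icc 1 N), Cpair N p.1 p.2 q.1 q.2 := by
      intro p
      rw [Finset.sum_comm]
      apply Finset.sum_congr rfl
      intro q _
      rw [Cpair, Finset.card_filter]
      apply Finset.sum_congr rfl
      intro l _
      by_cases h1 : p.2 ≤ l.parts.count p.1 <;> by_cases h2 : q.2 ≤ l.parts.count q.1 <;>
        simp [h1, h2]
    rw [Finset.sum_congr rfl (fun p _ => hswap p)]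
    rw [Finset.sum_product' (f := fun s1 j1 => ∑ q ∈ (Icc 1 N) ×ˢ (Icc 1 N),
      Cpair N s1 j1 q.1 q.2)]
    apply Finset.sum_congr rfl
    intro s1 _
    have : ∀ j1, ∑ q ∈ (Icc 1 N) ×ˢ (Icc 1 N), Cpair N s1 j1 q.1 q.2
        = ∑ s2 ∈ Icc 1 N, ∑ j2 ∈ Icc 1 N, Cpair N s1 j1 s2 j2 := fun j1 =>
      Finset.sum_product' (Icc 1 N) (Icc 1 N) (fun s2 j2 => Cpair N s1 j1 s2 j2)
    rw [Finset.sum_congr rfl (fun j1 _ => this j1)]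
    exact Finset.sum_comm
  rw [stepA]
  have hsplit : ∀ s1 ∈ Icc 1 N,
      (∑ s2 ∈ Icc 1 N, ∑ j1 ∈ Icc 1 N, ∑ j2 ∈ Icc 1 N, Cpair N s1 j1 s2 j2)
      = (∑ j ∈ Icc 1 N, j * ppc N (s1 * j))
        + ∑ s2 ∈ Icc 1 N, ∑ j1 ∈ Icc 1 N, ∑ j2 ∈ Icc 1 N, ppc N (s1 * j1 + s2 * j2) := by
    intro s1 hs1
    have hs1' : 0 < s1 := by rw [Finset.mem_Icc] at hs1; omega
    have hoff : ∀ s2 ∈ (Icc 1 N).erase s1,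
        (∑ j1 ∈ Icc 1 N, ∑ j2 ∈ Icc 1 N, Cpair N s1 j1 s2 j2)
        = ∑ j1 ∈ Icc 1 N, ∑ j2 ∈ Icc 1 N, ppc N (s1 * j1 + s2 * j2) := by
      intro s2 hs2
      have h2 := Finset.mem_of_mem_erase hs2
      rw [Finset.mem_Icc] at h2
      have hne : s1 ≠ s2 := (Finset.ne_of_mem_erase hs2).symm
      exact Finset.sum_congr rfl fun j1 _ => Finset.sum_congr rfl fun j2 _ =>
        Cpair_off N s1 j1 s2 j2 hs1' (by omega) hne
    have hvan : ∀ m, N < m → ppc N (s1 * m) = 0 := by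
      intro m hm
      apply ppc_eq_zero
      have : m ≤ s1 * m := Nat.le_mul_of_pos_left m hs1'
      omega
    have hdiag : (∑ j1 ∈ Icc 1 N, ∑ j2 ∈ Icc 1 N, Cpair N s1 j1 s1 j2)
        = (∑ j ∈ Icc 1 N, j * ppc N (s1 * j))
          + ∑ j1 ∈ Icc 1 N, ∑ j2 ∈ Icc 1 N, ppc N (s1 * j1 + s1 * j2) := by
      calc (∑ j1 ∈ Icc 1 N, ∑ j2 ∈ Icc 1 N, Cpair N s1 j1 s1 j2)
          = ∑ j1 ∈ Icc 1 N, ∑ j2 ∈ Icc 1 N,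
              (if j2 ≤ j1 then ppc N (s1 * j1) else ppc N (s1 * j2)) :=
            Finset.sum_congr rfl fun j1 _ => Finset.sum_congr rfl fun j2 _ =>
              Cpair_diag N s1 j1 j2 hs1'
        _ = (∑ j ∈ Icc 1 N, j * ppc N (s1 * j))
              + ∑ j ∈ Icc 1 N, (j - 1) * ppc N (s1 * j) :=
            sum_le_fiber N (fun j => ppc N (s1 * j))
        _ = (∑ j ∈ Icc 1 N, j * ppc N (s1 * j))
              + ∑ j1 ∈ Icc 1 N, ∑ j2 ∈ Icc 1 N, ppc N (s1 * (j1 + j2)) := by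
            rw [sum_add_fiber N (fun t => ppc N (s1 * t)) hvan]
            congr 1
            rw [← Finset.sum_subset (s₁ := Icc 1 N) (s₂ := range (N + 1))
              (by intro x hx; rw [Finset.mem_Icc] at hx; rw [Finset.mem_range]; omega)
              (by intro x hx hx'
                  rw [Finset.mem_range] at hx
                  rw [Finset.mem_Icc] at hx'
                  have : x = 0 := by omega
                  subst this
                  simp)]
        _ = (∑ j ∈ Icc 1 N, j * ppc N (s1 * j))
              + ∑ j1 ∈ Icc 1 N, ∑ j2 ∈ Icc 1 N, ppc N (s1 * j1 + s1 * j2) := by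
            congr 1
            exact Finset.sum_congr rfl fun j1 _ => Finset.sum_congr rfl fun j2 _ => by
              rw [mul_add]
    calc (∑ s2 ∈ Icc 1 N, ∑ j1 ∈ Icc 1 N, ∑ j2 ∈ Icc 1 N, Cpair N s1 j1 s2 j2)
        = (∑ j1 ∈ Icc 1 N, ∑ j2 ∈ Icc 1 N, Cpair N s1 j1 s1 j2)
            + ∑ s2 ∈ (Icc 1 N).erase s1, ∑ j1 ∈ Icc 1 N, ∑ j2 ∈ Icc 1 N,
                Cpair N s1 j1 s2 j2 := (Finset.add_sum_erase _ _ hs1).symm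
      _ = ((∑ j ∈ Icc 1 N, j * ppc N (s1 * j))
            + ∑ j1 ∈ Icc 1 N, ∑ j2 ∈ Icc 1 N, ppc N (s1 * j1 + s1 * j2))
            + ∑ s2 ∈ (Icc 1 N).erase s1, ∑ j1 ∈ Icc 1 N, ∑ j2 ∈ Icc 1 N,
                ppc N (s1 * j1 + s2 * j2) := by
          rw [hdiag]
          congr 1
          exact Finset.sum_congr rfl hoff
      _ = (∑ j ∈ Icc 1 N, j * ppc N (s1 * j))
            + ((∑ j1 ∈ Icc 1 N, ∑ j2 ∈ Icc 1 N, ppc N (s1 * j1 + s1 * j2))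
              + ∑ s2 ∈ (Icc 1 N).erase s1, ∑ j1 ∈ Icc 1 N, ∑ j2 ∈ Icc 1 N,
                  ppc N (s1 * j1 + s2 * j2)) := add_assoc _ _ _
      _ = (∑ j ∈ Icc 1 N, j * ppc N (s1 * j))
            + ∑ s2 ∈ Icc 1 N, ∑ j1 ∈ Icc 1 N, ∑ j2 ∈ Icc 1 N,
                ppc N (s1 * j1 + s2 * j2) := by
          rw [Finset.add_sum_erase (Icc 1 N)
            (fun s2 => ∑ j1 ∈ Icc 1 N, ∑ j2 ∈ Icc 1 N, ppc N (s1 * j1 + s2 * j2)) hs1]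
  rw [Finset.sum_congr rfl hsplit, Finset.sum_add_distrib, add_comm]
  congr 1
  · -- F = DD
    have hre : ∀ s1, (∑ s2 ∈ Icc 1 N, ∑ j1 ∈ Icc 1 N, ∑ j2 ∈ Icc 1 N,
        ppc N (s1 * j1 + s2 * j2))
        = ∑ j1 ∈ Icc 1 N, ∑ s2 ∈ Icc 1 N, ∑ j2 ∈ Icc 1 N, ppc N (s1 * j1 + s2 * j2) :=
      fun s1 => Finset.sum_comm
    rw [Finset.sum_congr rfl (fun s1 _ => hre s1)]
    have hW1 : ∀ m, N < m →
        (∑ s2 ∈ Icc 1 N, ∑ j2 ∈ Icc 1 N, ppc N (m + s2 * j2)) = 0 := by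
      intro m hm
      apply Finset.sum_eq_zero; intro s2 _
      apply Finset.sum_eq_zero; intro j2 _
      exact ppc_eq_zero (by omega)
    rw [sum_mul_fiber N (fun m => ∑ s2 ∈ Icc 1 N, ∑ j2 ∈ Icc 1 N, ppc N (m + s2 * j2)) hW1]
    apply Finset.sum_congr rfl
    intro a _
    have hW2 : ∀ m, N < m → ppc N (a + m) = 0 := fun m hm => ppc_eq_zero (by omega)
    rw [sum_mul_fiber N (fun m => ppc N (a + m)) hW2, Finset.mul_sum]
    apply Finset.sum_congr rfl
    intro b _
    ring
  · -- S = N * pp N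
    rw [Npp_eq N, Finset.sum_comm]
    apply Finset.sum_congr rfl
    intro x _
    apply Finset.sum_congr rfl
    intro y _
    rw [mul_comm y x]
-- ===== Part B: power series =====

section GF
open scoped Classical

/-- A convenience constructor for the power series whose coefficients indicate a subset. -/
def indicatorSeries (α : Type*) [Semiring α] (s : Set ℕ) : PowerSeries α :=
  PowerSeries.mk fun n => if n ∈ s then 1 else 0

theorem coeff_indicator (s : Set ℕ) {α : Type*} [Semiring α] (n : ℕ) :
    coeff n (indicatorSeries α s) = if n ∈ s then 1 else 0 :=
  coeff_mk _ _

theorem constantCoeff_indicator (s : Set ℕ) {α : Type*} [Semiring α] :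
    constantCoeff (indicatorSeries α s) = if 0 ∈ s then 1 else 0 :=
  rfl

theorem num_series' {α : Type*} [Field α] (i : ℕ) :
    (1 - (X : PowerSeries α) ^ (i + 1))⁻¹ = indicatorSeries α {k | i + 1 ∣ k} := by
  rw [PowerSeries.inv_eq_iff_mul_eq_one]
  · ext n
    cases n with
    | zero => simp [mul_sub, zero_pow, constantCoeff_indicator]
    | succ n =>
      simp only [coeff_one, if_false, mul_sub, mul_one, coeff_indicator,
        LinearMap.map_sub, reduceCtorEq]
      simp_rw [coeff_mul, coeff_X_pow, coeff_indicator, @boole_mul _ _ _ _]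
      erw [@sum_ite _ _ _ _ _ (fun _ => Classical.propDecidable _), sum_ite]
      simp_rw [@filter_filter _ _ _ _ _, sum_const_zero, add_zero, sum_const, nsmul_eq_mul,
        mul_one, sub_eq_iff_eq_add, zero_add]
      symm
      split_ifs with h
      · suffices #{a ∈ antidiagonal (n + 1) | i + 1 ∣ a.fst ∧ a.snd = i + 1} = 1 by
          simp only [Set.mem_setOf_eq]; convert congr_arg ((↑) : ℕ → α) this; norm_cast
        rw [card_eq_one]
        cases' h with p hp
        refine ⟨((i + 1) * (p - 1), i + 1), ?_⟩
        ext ⟨a₁, a₂⟩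
        simp only [mem_filter, Prod.mk_inj, HasAntidiagonal.mem_antidiagonal, mem_singleton]
        constructor
        · rintro ⟨a_left, ⟨a, rfl⟩, rfl⟩
          refine ⟨?_, rfl⟩
          rw [Nat.mul_sub_left_distrib, ← hp, ← a_left, mul_one, Nat.add_sub_cancel]
        · rintro ⟨rfl, rfl⟩
          match p with
          | 0 => rw [mul_zero] at hp; cases hp
          | p + 1 => rw [hp]; simp [mul_add]
      · suffices #{a ∈ antidiagonal (n + 1) | i + 1 ∣ a.fst ∧ a.snd = i + 1} = 0 by
          simp only [Set.mem_setOf_eq]; convert congr_arg ((↑) : ℕ → α) this; norm_cast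
        rw [card_eq_zero]
        apply eq_empty_of_forall_notMem
        simp only [Prod.forall, mem_filter, not_and, HasAntidiagonal.mem_antidiagonal]
        rintro _ h₁ h₂ ⟨a, rfl⟩ rfl
        apply h
        simp [← h₂]
  · simp [zero_pow]

-- The main workhorse (from the Archive, Wiedijk100Theorems/Partition.lean).
theorem partialGF_prop (α : Type*) [CommSemiring α] (n : ℕ) (s : Finset ℕ)
    (hs : ∀ i ∈ s, 0 < i) (c : ℕ → Set ℕ) (hc : ∀ i, i ∉ s → 0 ∈ c i) :
    #{p : n.Partition | (∀ j, p.parts.count j ∈ c j) ∧ ∀ j ∈ p.parts, j ∈ s} =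
      coeff n (∏ i ∈ s, indicatorSeries α ((· * i) '' c i)) := by
  simp_rw [coeff_prod, coeff_indicator, prod_boole, sum_boole]
  apply congr_arg
  simp only [mem_univ, forall_true_left, not_and, not_forall, exists_prop,
    Set.mem_image, not_exists]
  set φ : (a : Nat.Partition n) →
    a ∈ filter (fun p ↦ (∀ (j : ℕ), Multiset.count j p.parts ∈ c j) ∧ ∀ j ∈ p.parts, j ∈ s)
      univ → ℕ →₀ ℕ := fun p _ => {
      toFun := fun i => Multiset.count i p.parts • i
      support := Finset.filter (fun i => i ≠ 0) p.parts.toFinset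
      mem_support_toFun := fun a => by
        simp only [smul_eq_mul, ne_eq, mul_eq_zero, Multiset.count_eq_zero]
        rw [not_or, not_not]
        simp only [Multiset.mem_toFinset, not_not, mem_filter] }
  refine Finset.card_bij φ ?_ ?_ ?_
  · intro a ha
    simp only [φ, not_forall, not_exists, not_and, exists_prop, mem_filter]
    rw [mem_finsuppAntidiag]
    dsimp only [ne_eq, smul_eq_mul, id_eq, eq_mpr_eq_cast, le_eq_subset, Finsupp.coe_mk]
    simp only [mem_univ, forall_true_left, not_and, not_forall, exists_prop,
      mem_filter, true_and] at ha
    refine ⟨⟨?_, fun i ↦ ?_⟩, fun i _ ↦ ⟨a.parts.count i, ha.1 i, rfl⟩⟩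
    · conv_rhs => simp [← a.parts_sum]
      rw [sum_multiset_count_of_subset _ s]
      · simp only [smul_eq_mul]
      · intro i
        simp only [Multiset.mem_toFinset, not_not, mem_filter]
        apply ha.2
    · simp only [ne_eq, Multiset.mem_toFinset, not_not, mem_filter, and_imp]
      exact fun hi _ ↦ ha.2 i hi
  · intro p₁ hp₁ p₂ hp₂ h
    apply Nat.Partition.ext
    simp only [true_and, mem_univ, mem_filter] at hp₁ hp₂
    ext i
    simp only [φ, ne_eq, Multiset.mem_toFinset, not_not, smul_eq_mul, Finsupp.mk.injEq] at h
    by_cases hi : i = 0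
    · rw [hi]
      rw [Multiset.count_eq_zero_of_notMem]
      · rw [Multiset.count_eq_zero_of_notMem]
        intro a; exact Nat.lt_irrefl 0 (hs 0 (hp₂.2 0 a))
      intro a; exact Nat.lt_irrefl 0 (hs 0 (hp₁.2 0 a))
    · rw [← mul_left_inj' hi]
      rw [funext_iff] at h
      exact h.2 i
  · simp only [φ, mem_filter, mem_finsuppAntidiag, mem_univ, exists_prop, true_and, and_assoc]
    rintro f ⟨hf, hf₃, hf₄⟩
    have hf' : f ∈ finsuppAntidiag s n := mem_finsuppAntidiag.mpr ⟨hf, hf₃⟩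
    simp only [mem_finsuppAntidiag] at hf'
    refine ⟨⟨∑ i ∈ s, Multiset.replicate (f i / i) i, ?_, ?_⟩, ?_, ?_, ?_⟩
    · intro i hi
      simp only [exists_prop, Multiset.mem_sum, mem_map, Function.Embedding.coeFn_mk] at hi
      rcases hi with ⟨t, ht, z⟩
      apply hs
      rwa [Multiset.eq_of_mem_replicate z]
    · simp_rw [Multiset.sum_sum, Multiset.sum_replicate, Nat.nsmul_eq_mul]
      rw [← hf'.1]
      refine sum_congr rfl fun i hi => Nat.div_mul_cancel ?_
      rcases hf₄ i hi with ⟨w, _, hw₂⟩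
      rw [← hw₂]
      exact dvd_mul_left _ _
    · intro i
      simp_rw [Multiset.count_sum', Multiset.count_replicate, sum_ite_eq']
      split_ifs with h
      · rcases hf₄ i h with ⟨w, hw₁, hw₂⟩
        rwa [← hw₂, Nat.mul_div_cancel _ (hs i h)]
      · exact hc _ h
    · intro i hi
      rw [Multiset.mem_sum] at hi
      rcases hi with ⟨j, hj₁, hj₂⟩
      rwa [Multiset.eq_of_mem_replicate hj₂]
    · ext i
      simp_rw [Multiset.count_sum', Multiset.count_replicate, sum_ite_eq']
      simp only [ne_eq, Multiset.mem_toFinset, not_not, smul_eq_mul, ite_mul,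
        zero_mul, Finsupp.coe_mk]
      split_ifs with h
      · apply Nat.div_mul_cancel
        rcases hf₄ i h with ⟨w, _, hw₂⟩
        apply Dvd.intro_left _ hw₂
      · apply symm
        rw [← Finsupp.notMem_support_iff]
        exact notMem_mono hf'.2 h

end GF
lemma coeff_prodInv (M j : ℕ) (h : j ≤ M) :
    coeff (R := ℚ) j (∏ k ∈ Icc 1 M, ((1 : PowerSeries ℚ) - X ^ k)⁻¹) = pp j := by
  classical
  have hprod : ∀ k ∈ Icc 1 M, ((1 : PowerSeries ℚ) - X ^ k)⁻¹
      = indicatorSeries ℚ ((· * k) '' Set.univ) := by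
    intro k hk
    rw [Finset.mem_Icc] at hk
    have himg : ((· * k) '' Set.univ) = {m | k ∣ m} := by
      ext m
      simp only [Set.mem_image, Set.mem_univ, true_and, Set.mem_setOf_eq]
      constructor
      · rintro ⟨a, rfl⟩
        exact Dvd.intro_left a rfl
      · rintro ⟨a, rfl⟩
        exact ⟨a, mul_comm a k⟩
    rw [himg]
    have := num_series' (α := ℚ) (k - 1)
    rwa [Nat.sub_add_cancel hk.1] at this
  rw [Finset.prod_congr rfl hprod]
  rw [← partialGF_prop ℚ j (Icc 1 M) (fun i hi => by rw [Finset.mem_Icc] at hi; omega)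
    (fun _ => Set.univ) (fun _ _ => trivial)]
  rw [pp, ← Finset.card_univ]
  congr 1
  refine congrArg Finset.card ?_
  apply Finset.filter_true_of_mem
  intro l _
  refine ⟨fun _ => trivial, fun a ha => ?_⟩
  rw [Finset.mem_Icc]
  exact ⟨l.parts_pos ha, le_trans (parts_mem_le l ha) h⟩

lemma X_pow_dvd_prod_sub_one (n : ℕ) (t : Finset ℕ) (ht : ∀ k ∈ t, n ≤ k) :
    (X : PowerSeries ℚ) ^ n ∣ (∏ k ∈ t, (1 - X ^ k)) - 1 := by
  classical
  induction t using Finset.cons_induction with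
  | empty => simp
  | cons a t ha ih =>
    rw [Finset.prod_cons]
    have h1 : (X : PowerSeries ℚ) ^ n ∣ (∏ k ∈ t, (1 - X ^ k)) - 1 :=
      ih fun k hk => ht k (Finset.mem_cons_of_mem hk)
    have h2 : (X : PowerSeries ℚ) ^ n ∣ X ^ a :=
      pow_dvd_pow X (ht a (Finset.mem_cons_self a t))
    have hring : (1 - X ^ a) * (∏ k ∈ t, (1 - X ^ k)) - 1
        = ((∏ k ∈ t, ((1 : PowerSeries ℚ) - X ^ k)) - 1)
          - X ^ a * ∏ k ∈ t, (1 - X ^ k) := by ring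
    rw [hring]
    exact dvd_sub h1 (h2.mul_right _)

lemma coeff_qPoch_stable (i M : ℕ) (h : i ≤ M) :
    coeff i (qPoch M) = coeff i (qPoch i) := by
  have hsplit : qPoch M = qPoch i * ∏ k ∈ Icc (i + 1) M, (1 - X ^ k) := by
    rw [qPoch, qPoch, ← Finset.prod_union (by
      rw [Finset.disjoint_left]
      intro x hx hx'
      rw [Finset.mem_Icc] at hx hx'
      omega)]
    congr 1
    ext x
    simp only [Finset.mem_union, Finset.mem_Icc]
    omega
  rw [hsplit]
  have hdvd : (X : PowerSeries ℚ) ^ (i + 1) ∣ (∏ k ∈ Icc (i + 1) M, (1 - X ^ k)) - 1 :=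
    X_pow_dvd_prod_sub_one (i + 1) _ fun k hk => by rw [Finset.mem_Icc] at hk; omega
  have hexp : qPoch i * ∏ k ∈ Icc (i + 1) M, (1 - X ^ k)
      = qPoch i + qPoch i * ((∏ k ∈ Icc (i + 1) M, (1 - X ^ k)) - 1) := by ring
  rw [hexp, map_add]
  have hz : coeff i (qPoch i * ((∏ k ∈ Icc (i + 1) M, (1 - X ^ k)) - 1)) = 0 := by
    have hd : (X : PowerSeries ℚ) ^ (i + 1)
        ∣ qPoch i * ((∏ k ∈ Icc (i + 1) M, (1 - X ^ k)) - 1) := hdvd.mul_left _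
    exact PowerSeries.X_pow_dvd_iff.mp hd i (Nat.lt_succ_self i)
  rw [hz, add_zero]

lemma coeff_qInf (i M : ℕ) (h : i ≤ M) : coeff i qInf = coeff i (qPoch M) := by
  rw [qInf, coeff_mk]
  exact (coeff_qPoch_stable i M h).symm

lemma qInf_mul_pp : qInf * (PowerSeries.mk fun n => (pp n : ℚ)) = 1 := by
  ext N
  rw [PowerSeries.coeff_mul]
  have h1 : ∀ p ∈ antidiagonal N,
      coeff p.1 qInf * coeff p.2 (PowerSeries.mk fun n => (pp n : ℚ))
      = coeff p.1 (qPoch N) * coeff p.2 (∏ k ∈ Icc 1 N, ((1:PowerSeries ℚ) - X ^ k)⁻¹) := by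
    intro p hp
    rw [Finset.HasAntidiagonal.mem_antidiagonal] at hp
    rw [coeff_qInf p.1 N (by omega), PowerSeries.coeff_mk, coeff_prodInv N p.2 (by omega)]
  rw [Finset.sum_congr rfl h1, ← PowerSeries.coeff_mul]
  have hone : qPoch N * (∏ k ∈ Icc 1 N, ((1:PowerSeries ℚ) - X ^ k)⁻¹) = 1 := by
    rw [qPoch, ← Finset.prod_mul_distrib]
    rw [Finset.prod_congr rfl (fun k hk => ?_), Finset.prod_const_one]
    rw [Finset.mem_Icc] at hk
    apply PowerSeries.mul_inv_cancel
    rw [map_sub, map_one, map_pow, PowerSeries.constantCoeff_X, zero_pow (by omega : k ≠ 0),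
      sub_zero]
    norm_num
  rw [hone]

lemma constantCoeff_qInf : constantCoeff qInf = 1 := by
  have : constantCoeff qInf = coeff 0 qInf :=
    (congrFun PowerSeries.coeff_zero_eq_constantCoeff qInf).symm
  rw [this, qInf, coeff_mk, qPoch]
  simp

lemma qInf_inv : qInf⁻¹ = PowerSeries.mk fun n => (pp n : ℚ) := by
  rw [PowerSeries.inv_eq_iff_mul_eq_one (by rw [constantCoeff_qInf]; norm_num)]
  rw [mul_comm]
  exact qInf_mul_pp
lemma card_divfilter (k : ℕ) :
    ((range (k + 1)).filter fun n => n + 1 ≤ k ∧ (n + 1) ∣ (k - (n + 1))).card = d k := by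
  rcases Nat.eq_zero_or_pos k with rfl | hk
  · rw [d, Nat.divisors_zero, Finset.card_empty, Finset.card_eq_zero]
    apply Finset.eq_empty_of_forall_notMem
    intro n hn
    rw [Finset.mem_filter] at hn
    omega
  · rw [d]
    apply Finset.card_nbij (i := fun n => n + 1)
    · intro n hn
      simp only [Finset.mem_coe, Finset.mem_filter, Finset.mem_range] at hn
      simp only [Finset.mem_coe]
      rw [Nat.mem_divisors]
      have hd : (n + 1) ∣ (k - (n + 1)) + (n + 1) := Nat.dvd_add hn.2.2 dvd_rfl
      rw [Nat.sub_add_cancel hn.2.1] at hd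
      exact ⟨hd, by omega⟩
    · intro a _ b _ hab
      simpa using hab
    · intro a ha
      simp only [Finset.mem_coe, Nat.mem_divisors] at ha
      have ha1 : 0 < a := Nat.pos_of_dvd_of_pos ha.1 hk
      have hak : a ≤ k := Nat.le_of_dvd hk ha.1
      refine ⟨a - 1, ?_, by show a - 1 + 1 = a; omega⟩
      simp only [Finset.mem_coe, Finset.mem_filter, Finset.mem_range]
      have : a - 1 + 1 = a := by omega
      rw [this]
      exact ⟨by omega, hak, Nat.dvd_sub ha.1 dvd_rfl⟩

lemma coeff_divSum (k : ℕ) : coeff k divSum = (d k : ℚ) := by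
  classical
  rw [divSum, seriesSum, coeff_mk]
  have hterm : ∀ n ∈ range (k + 1),
      coeff k ((X : PowerSeries ℚ) ^ (n + 1) * (1 - X ^ (n + 1))⁻¹)
      = if n + 1 ≤ k ∧ (n + 1) ∣ (k - (n + 1)) then 1 else 0 := by
    intro n _
    by_cases h : n + 1 ≤ k
    · have h2 := PowerSeries.coeff_X_pow_mul
        ((1 - (X : PowerSeries ℚ) ^ (n + 1))⁻¹) (n + 1) (k - (n + 1))
      rw [show k - (n + 1) + (n + 1) = k from by omega] at h2
      rw [h2, num_series', coeff_indicator]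
      by_cases hd : (n + 1) ∣ (k - (n + 1)) <;> simp [Set.mem_setOf_eq, h, hd]
    · have hd : (X : PowerSeries ℚ) ^ (n + 1)
          ∣ (X : PowerSeries ℚ) ^ (n + 1) * (1 - X ^ (n + 1))⁻¹ := Dvd.intro _ rfl
      rw [PowerSeries.X_pow_dvd_iff.mp hd k (by omega)]
      simp [h]
  rw [Finset.sum_congr rfl hterm, Finset.sum_boole, card_divfilter]

lemma DD_fiber (N : ℕ) :
    ∑ a ∈ range (N + 1), ∑ b ∈ range (N + 1), d a * d b * ppc N (a + b)
    = ∑ t ∈ range (N + 1), (∑ q ∈ antidiagonal t, d q.1 * d q.2) * ppc N t := by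
  rw [← Finset.sum_product' (range (N + 1)) (range (N + 1))
    (fun a b => d a * d b * ppc N (a + b))]
  have hmap : ∀ p ∈ range (N + 1) ×ˢ range (N + 1), p.1 + p.2 ∈ range (2 * N + 1) := by
    intro p hp
    rw [Finset.mem_product, Finset.mem_range, Finset.mem_range] at hp
    rw [Finset.mem_range]
    omega
  have hfib := Finset.sum_fiberwise_of_maps_to (s := range (N + 1) ×ˢ range (N + 1))
    (g := fun p : ℕ × ℕ => p.1 + p.2) (t := range (2 * N + 1)) hmap
    (fun p => d p.1 * d p.2 * ppc N (p.1 + p.2))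
  rw [← hfib]
  have hsub : range (N + 1) ⊆ range (2 * N + 1) := Finset.range_subset_range.mpr (by omega)
  rw [← Finset.sum_subset hsub]
  · apply Finset.sum_congr rfl
    intro t ht
    rw [Finset.mem_range] at ht
    have hfil : ((range (N + 1) ×ˢ range (N + 1)).filter fun p => p.1 + p.2 = t)
        = antidiagonal t := by
      ext p
      simp only [Finset.mem_filter, Finset.mem_product, Finset.mem_range,
        Finset.HasAntidiagonal.mem_antidiagonal]
      omega
    rw [hfil]
    rw [show (∑ p ∈ antidiagonal t, d p.1 * d p.2 * ppc N (p.1 + p.2))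
        = ∑ p ∈ antidiagonal t, d p.1 * d p.2 * ppc N t from
      Finset.sum_congr rfl fun p hp => by
        rw [Finset.HasAntidiagonal.mem_antidiagonal] at hp; rw [hp]]
    rw [← Finset.sum_mul]
  · intro t ht ht'
    rw [Finset.mem_range] at ht ht'
    apply Finset.sum_eq_zero
    intro p hp
    rw [(Finset.mem_filter.mp hp).2, ppc_eq_zero (by omega), mul_zero]

lemma DD_match (N : ℕ) :
    ∑ a ∈ range (N + 1), ∑ b ∈ range (N + 1), d a * d b * ppc N (a + b)
    = ∑ p ∈ antidiagonal N, pp p.1 * ∑ q ∈ antidiagonal p.2, d q.1 * d q.2 := by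
  rw [DD_fiber, Finset.Nat.sum_antidiagonal_eq_sum_range_succ_mk
    (fun p => pp p.1 * ∑ q ∈ antidiagonal p.2, d q.1 * d q.2) N]
  rw [← Finset.sum_range_reflect]
  apply Finset.sum_congr rfl
  intro t ht
  rw [Finset.mem_range] at ht
  have h1 : N + 1 - 1 - t = N - t := by omega
  rw [h1, ppc, if_pos (by omega : N - t ≤ N), show N - (N - t) = t from by omega, mul_comm]

theorem stmt9' :
    (PowerSeries.mk fun n => (p2 n : ℚ)) =
      qInf⁻¹ * divSum ^ 2 + PowerSeries.mk fun n => (n * pp n : ℚ) := by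
  rw [qInf_inv, pow_two]
  ext N
  rw [map_add, PowerSeries.coeff_mk, PowerSeries.coeff_mk, PowerSeries.coeff_mul]
  have hterm : ∀ p ∈ antidiagonal N,
      coeff p.1 (PowerSeries.mk fun n => (pp n : ℚ)) * coeff p.2 (divSum * divSum)
      = (pp p.1 : ℚ) * ∑ q ∈ antidiagonal p.2, (d q.1 : ℚ) * (d q.2 : ℚ) := by
    intro p _
    rw [PowerSeries.coeff_mk, PowerSeries.coeff_mul]
    congr 1
    exact Finset.sum_congr rfl fun q _ => by rw [coeff_divSum, coeff_divSum]
  rw [Finset.sum_congr rfl hterm]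
  have hnat : p2 N = (∑ p ∈ antidiagonal N, pp p.1 * ∑ q ∈ antidiagonal p.2, d q.1 * d q.2)
      + N * pp N := by
    rw [key N, DD_match N]
  rw [hnat]
  push_cast
  ring

/-- Σ p₂(n) qⁿ = (1/(q;q)_∞)(Σ_{n≥1} qⁿ/(1−qⁿ))² + Σ n p(n) qⁿ. -/
theorem stmt9 :
    (PowerSeries.mk fun n => (p2 n : ℚ)) =
      qInf⁻¹ * divSum ^ 2 + PowerSeries.mk fun n => (n * pp n : ℚ) := by
  exact stmt9'
end
end

section
/- As formal power series in q: Σ_{n≥1} (1/(q;q)_∞ − 1/(q;q)_n) · Σ_{i=1}^{n} q^i/(1−q^i) = Σ_{n≥1} (p_2(n) − n·p(n) − N_2(n)/2) q^n. -/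
open Finset PowerSeries

noncomputable section

namespace Aux
open scoped Classical

/-- A convenience constructor for the power series whose coefficients indicate a subset. -/
def indicatorSeries (α : Type*) [Semiring α] (s : Set ℕ) : PowerSeries α :=
  PowerSeries.mk fun n => if n ∈ s then 1 else 0

variable {α : Type*}

theorem coeff_indicator (s : Set ℕ) [Semiring α] (n : ℕ) :
    coeff n (indicatorSeries α s) = if n ∈ s then 1 else 0 :=
  coeff_mk _ _

theorem coeff_indicator_pos (s : Set ℕ) [Semiring α] (n : ℕ) (h : n ∈ s) :
    coeff n (indicatorSeries α s) = 1 := by rw [coeff_indicator, if_pos h]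

theorem coeff_indicator_neg (s : Set ℕ) [Semiring α] (n : ℕ) (h : n ∉ s) :
    coeff n (indicatorSeries α s) = 0 := by rw [coeff_indicator, if_neg h]

theorem constantCoeff_indicator (s : Set ℕ) [Semiring α] :
    constantCoeff (indicatorSeries α s) = if 0 ∈ s then 1 else 0 :=
  rfl

theorem num_series' [Field α] (i : ℕ) :
    (1 - (X : PowerSeries α) ^ (i + 1))⁻¹ = indicatorSeries α {k | i + 1 ∣ k} := by
  rw [PowerSeries.inv_eq_iff_mul_eq_one]
  · ext n
    cases n with
    | zero => simp [mul_sub, zero_pow, constantCoeff_indicator]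
    | succ n =>
      simp only [coeff_one, if_false, mul_sub, mul_one, coeff_indicator,
        LinearMap.map_sub, reduceCtorEq]
      simp_rw [coeff_mul, coeff_X_pow, coeff_indicator, @boole_mul _ _ _ _]
      rw [@sum_ite _ _ _ _ _ (fun _ => Classical.propDecidable _), sum_ite]
      simp_rw [@filter_filter _ _ _ _ _, sum_const_zero, add_zero, sum_const, nsmul_eq_mul, mul_one,
        sub_eq_iff_eq_add, zero_add]
      symm
      split_ifs with h
      · suffices #{a ∈ antidiagonal (n + 1) | i + 1 ∣ a.fst ∧ a.snd = i + 1} = 1 by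
          simp only [Set.mem_setOf_eq]; convert congr_arg ((↑) : ℕ → α) this; norm_cast
        rw [card_eq_one]
        cases' h with p hp
        refine ⟨((i + 1) * (p - 1), i + 1), ?_⟩
        ext ⟨a₁, a₂⟩
        simp only [mem_filter, Prod.mk_inj, HasAntidiagonal.mem_antidiagonal, mem_singleton]
        constructor
        · rintro ⟨a_left, ⟨a, rfl⟩, rfl⟩
          refine ⟨?_, rfl⟩
          rw [Nat.mul_sub_left_distrib, ← hp, ← a_left, mul_one, Nat.add_sub_cancel]
        · rintro ⟨rfl, rfl⟩
          match p with
          | 0 => rw [mul_zero] at hp; cases hp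
          | p + 1 => rw [hp]; simp [mul_add]
      · suffices #{a ∈ antidiagonal (n + 1) | i + 1 ∣ a.fst ∧ a.snd = i + 1} = 0 by
          simp only [Set.mem_setOf_eq]; convert congr_arg ((↑) : ℕ → α) this; norm_cast
        rw [card_eq_zero]
        apply eq_empty_of_forall_notMem
        simp only [Prod.forall, mem_filter, not_and, HasAntidiagonal.mem_antidiagonal]
        rintro _ h₁ h₂ ⟨a, rfl⟩ rfl
        apply h
        simp [← h₂]
  · simp [zero_pow]

-- The main workhorse.
theorem partialGF_prop (α : Type*) [CommSemiring α] (n : ℕ) (s : Finset ℕ) (hs : ∀ i ∈ s, 0 < i)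
    (c : ℕ → Set ℕ) (hc : ∀ i, i ∉ s → 0 ∈ c i) :
    #{p : n.Partition | (∀ j, p.parts.count j ∈ c j) ∧ ∀ j ∈ p.parts, j ∈ s} =
      coeff n (∏ i ∈ s, indicatorSeries α ((· * i) '' c i)) := by
  simp_rw [coeff_prod, coeff_indicator, prod_boole, sum_boole]
  apply congr_arg
  simp only [mem_univ, forall_true_left, not_and, not_forall, exists_prop,
    Set.mem_image, not_exists]
  set φ : (a : Nat.Partition n) →
    a ∈ filter (fun p ↦ (∀ (j : ℕ), Multiset.count j p.parts ∈ c j) ∧ ∀ j ∈ p.parts, j ∈ s) univ →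
    ℕ →₀ ℕ := fun p _ => {
      toFun := fun i => Multiset.count i p.parts • i
      support := Finset.filter (fun i => i ≠ 0) p.parts.toFinset
      mem_support_toFun := fun a => by
        simp only [smul_eq_mul, ne_eq, mul_eq_zero, Multiset.count_eq_zero]
        rw [not_or, not_not]
        simp only [Multiset.mem_toFinset, not_not, mem_filter] }
  refine Finset.card_bij φ ?_ ?_ ?_
  · intro a ha
    simp only [φ, not_forall, not_exists, not_and, exists_prop, mem_filter]
    rw [mem_finsuppAntidiag]
    dsimp only [ne_eq, smul_eq_mul, id_eq, eq_mpr_eq_cast, le_eq_subset, Finsupp.coe_mk]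
    simp only [mem_univ, forall_true_left, not_and, not_forall, exists_prop,
      mem_filter, true_and] at ha
    refine ⟨⟨?_, fun i ↦ ?_⟩, fun i _ ↦ ⟨a.parts.count i, ha.1 i, rfl⟩⟩
    · conv_rhs => simp [← a.parts_sum]
      rw [sum_multiset_count_of_subset _ s]
      · simp only [smul_eq_mul]
      · intro i
        simp only [Multiset.mem_toFinset, not_not, mem_filter]
        apply ha.2
    · simp only [ne_eq, Multiset.mem_toFinset, not_not, mem_filter, and_imp]
      exact fun hi _ ↦ ha.2 i hi
  · intro p₁ hp₁ p₂ hp₂ h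
    apply Nat.Partition.ext
    simp only [true_and, mem_univ, mem_filter] at hp₁ hp₂
    ext i
    simp only [φ, ne_eq, Multiset.mem_toFinset, not_not, smul_eq_mul, Finsupp.mk.injEq] at h
    by_cases hi : i = 0
    · rw [hi]
      rw [Multiset.count_eq_zero_of_notMem]
      · rw [Multiset.count_eq_zero_of_notMem]
        intro a; exact Nat.lt_irrefl 0 (hs 0 (hp₂.2 0 a))
      intro a; exact Nat.lt_irrefl 0 (hs 0 (hp₁.2 0 a))
    · rw [← mul_left_inj' hi]
      rw [funext_iff] at h
      exact h.2 i
  · simp only [φ, mem_filter, mem_finsuppAntidiag, mem_univ, exists_prop, true_and, and_assoc]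
    rintro f ⟨hf, hf₃, hf₄⟩
    have hf' : f ∈ finsuppAntidiag s n := mem_finsuppAntidiag.mpr ⟨hf, hf₃⟩
    simp only [mem_finsuppAntidiag] at hf'
    refine ⟨⟨∑ i ∈ s, Multiset.replicate (f i / i) i, ?_, ?_⟩, ?_, ?_, ?_⟩
    · intro i hi
      simp only [exists_prop, Multiset.mem_sum, mem_map, Function.Embedding.coeFn_mk] at hi
      rcases hi with ⟨t, ht, z⟩
      apply hs
      rwa [Multiset.eq_of_mem_replicate z]
    · simp_rw [Multiset.sum_sum, Multiset.sum_replicate, Nat.nsmul_eq_mul]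
      rw [← hf'.1]
      refine sum_congr rfl fun i hi => Nat.div_mul_cancel ?_
      rcases hf₄ i hi with ⟨w, _, hw₂⟩
      rw [← hw₂]
      exact dvd_mul_left _ _
    · intro i
      simp_rw [Multiset.count_sum', Multiset.count_replicate, sum_ite_eq']
      split_ifs with h
      · rcases hf₄ i h with ⟨w, hw₁, hw₂⟩
        rwa [← hw₂, Nat.mul_div_cancel _ (hs i h)]
      · exact hc _ h
    · intro i hi
      rw [Multiset.mem_sum] at hi
      rcases hi with ⟨j, hj₁, hj₂⟩
      rwa [Multiset.eq_of_mem_replicate hj₂]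
    · ext i
      simp_rw [Multiset.count_sum', Multiset.count_replicate, sum_ite_eq']
      simp only [ne_eq, Multiset.mem_toFinset, not_not, smul_eq_mul, ite_mul,
        zero_mul, Finsupp.coe_mk]
      split_ifs with h
      · apply Nat.div_mul_cancel
        rcases hf₄ i h with ⟨w, _, hw₂⟩
        apply Dvd.intro_left _ hw₂
      · apply symm
        rw [← Finsupp.notMem_support_iff]
        exact notMem_mono hf'.2 h
/-- number of partitions of `k` with all parts at most `N` -/
def Ple (k N : ℕ) : ℕ :=
  ((univ : Finset (Nat.Partition k)).filter fun p => ∀ j ∈ p.parts, j ≤ N).card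

theorem coeff_prod_inv (k N : ℕ) :
    coeff k (∏ i ∈ Icc 1 N, (1 - (X : PowerSeries ℚ) ^ i)⁻¹ : PowerSeries ℚ) = Ple k N := by
  have h1 : ∀ i ∈ Icc 1 N, (1 - (X : PowerSeries ℚ) ^ i)⁻¹ =
      indicatorSeries ℚ ((· * i) '' (Set.univ : Set ℕ)) := by
    intro i hi
    rw [mem_Icc] at hi
    obtain ⟨i, rfl⟩ : ∃ j, j + 1 = i := ⟨i - 1, by omega⟩
    have hset : ((· * (i + 1)) '' (Set.univ : Set ℕ)) = {k | i + 1 ∣ k} := by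
      ext x
      constructor
      · rintro ⟨y, -, rfl⟩; exact Dvd.intro_left y rfl
      · rintro ⟨c, rfl⟩; exact ⟨c, trivial, mul_comm _ _⟩
    rw [num_series', hset]
  rw [prod_congr rfl h1, ← partialGF_prop ℚ k (Icc 1 N) (by intro i hi; rw [mem_Icc] at hi; omega)
    (fun _ => Set.univ) (fun _ _ => trivial)]
  rw [Ple]
  norm_cast
  congr 1
  apply filter_congr
  intro p _
  simp only [Set.mem_univ, forall_const, true_and, mem_Icc]
  constructor
  · intro h j hj; exact (h j hj).2
  · intro h j hj; exact ⟨p.parts_pos hj, h j hj⟩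

/-- number of partitions of `n` (matches pp) -/
def ppA (n : ℕ) : ℕ := Fintype.card (Nat.Partition n)

def qPochA (n : ℕ) : PowerSeries ℚ := ∏ k ∈ Icc 1 n, (1 - X ^ k)
def qInfA : PowerSeries ℚ := PowerSeries.mk fun N => coeff N (qPochA N)

theorem constCoeff_one_sub_X_pow (i : ℕ) (hi : 1 ≤ i) :
    constantCoeff (1 - (X : PowerSeries ℚ) ^ i) = 1 := by
  rw [map_sub, map_one, map_pow, constantCoeff_X, zero_pow (by omega), sub_zero]

theorem constCoeff_qPochA (N : ℕ) : constantCoeff (qPochA N) = 1 := by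
  rw [qPochA, map_prod]
  rw [Finset.prod_congr rfl fun i hi => constCoeff_one_sub_X_pow i (mem_Icc.mp hi).1]
  simp

theorem qPochA_inv (N : ℕ) :
    (qPochA N)⁻¹ = ∏ i ∈ Icc 1 N, (1 - (X : PowerSeries ℚ) ^ i)⁻¹ := by
  rw [PowerSeries.inv_eq_iff_mul_eq_one]
  · rw [qPochA, ← Finset.prod_mul_distrib]
    rw [Finset.prod_congr rfl (g := fun _ => (1 : PowerSeries ℚ)) fun i hi => by
      rw [mul_comm]; exact PowerSeries.mul_inv_cancel _
        (by rw [constCoeff_one_sub_X_pow i (mem_Icc.mp hi).1]; norm_num)]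
    simp
  · rw [constCoeff_qPochA]; norm_num

theorem coeff_one_sub_X_pow (a i : ℕ) :
    coeff i (1 - (X : PowerSeries ℚ) ^ a) =
      (if i = 0 then 1 else 0) - (if i = a then 1 else 0) := by
  rw [map_sub, coeff_one, coeff_X_pow]

theorem coeff_qPochA_stable {j N M : ℕ} (hjN : j ≤ N) (hNM : N ≤ M) :
    coeff j (qPochA M) = coeff j (qPochA N) := by
  have key : ∀ s : Finset ℕ, (∀ k ∈ s, N < k) → ∀ i ≤ N,
      coeff i (∏ k ∈ s, (1 - (X : PowerSeries ℚ) ^ k)) = if i = 0 then 1 else 0 := by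
    intro s
    induction s using Finset.induction with
    | empty => intro _ i _; simp [coeff_one]
    | @insert a s ha ih =>
      intro hs i hi
      have ha' : N < a := hs a (mem_insert_self a s)
      rw [Finset.prod_insert ha, coeff_mul]
      rw [Finset.sum_eq_single ((0 : ℕ), i)]
      · rw [coeff_one_sub_X_pow, if_pos rfl, if_neg (by omega), sub_zero, one_mul,
          ih (fun k hk => hs k (mem_insert_of_mem hk)) i hi]
      · rintro ⟨x1, x2⟩ hx hne
        rw [HasAntidiagonal.mem_antidiagonal] at hx
        have hx1 : x1 ≠ 0 := by
          intro h; apply hne; rw [Prod.ext_iff]; simp only at hx ⊢; omega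
        rw [coeff_one_sub_X_pow, if_neg hx1, if_neg (by simp at hx; omega), sub_zero, zero_mul]
      · intro h; exact absurd (by simp) h
  have hsplit : qPochA M = qPochA N * ∏ k ∈ Ioc N M, (1 - (X : PowerSeries ℚ) ^ k) := by
    rw [qPochA, qPochA, ← Finset.prod_union (by
      rw [Finset.disjoint_left]
      intro x hx1 hx2
      rw [mem_Icc] at hx1; rw [mem_Ioc] at hx2; omega)]
    congr 1
    rw [Finset.ext_iff]
    intro x
    simp only [mem_union, mem_Icc, mem_Ioc]
    omega
  rw [hsplit, coeff_mul, Finset.sum_eq_single ((j : ℕ), (0 : ℕ))]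
  · rw [key (Ioc N M) (fun k hk => (mem_Ioc.mp hk).1) 0 (by omega), if_pos rfl, mul_one]
  · rintro ⟨x1, x2⟩ hx hne
    rw [HasAntidiagonal.mem_antidiagonal] at hx
    have hx2 : x2 ≠ 0 := by
      intro h; apply hne; rw [Prod.ext_iff]; simp only at hx ⊢; omega
    rw [key (Ioc N M) (fun k hk => (mem_Ioc.mp hk).1) x2 (by simp at hx; omega), if_neg hx2,
      mul_zero]
  · intro h; exact absurd (by simp) h

theorem coeff_qInfA (j N : ℕ) (h : j ≤ N) : coeff j qInfA = coeff j (qPochA N) := by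
  rw [qInfA, coeff_mk, coeff_qPochA_stable (le_refl j) h]

/-- truncation lemma for inverses -/
theorem coeff_inv_congr {A B : PowerSeries ℚ} (hA : constantCoeff A ≠ 0) (k : ℕ)
    (h : ∀ j ≤ k, coeff j A = coeff j B) : ∀ j ≤ k, coeff j A⁻¹ = coeff j B⁻¹ := by
  intro j hj
  induction j using Nat.strong_induction_on with
  | _ j ih =>
  have hc : constantCoeff A = constantCoeff B := by
    rw [← coeff_zero_eq_constantCoeff_apply, ← coeff_zero_eq_constantCoeff_apply]
    exact h 0 (by omega)
  rw [PowerSeries.coeff_inv, PowerSeries.coeff_inv, ← hc]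
  by_cases hj0 : j = 0
  · rw [if_pos hj0, if_pos hj0]
  · rw [if_neg hj0, if_neg hj0]
    congr 1
    apply Finset.sum_congr rfl
    intro x hx
    rw [HasAntidiagonal.mem_antidiagonal] at hx
    by_cases hlt : x.2 < j
    · rw [if_pos hlt, if_pos hlt, h x.1 (by omega), ih x.2 hlt (by omega)]
    · rw [if_neg hlt, if_neg hlt]

theorem coeff_qPochA_inv (k N : ℕ) : coeff k (qPochA N)⁻¹ = Ple k N := by
  rw [qPochA_inv, coeff_prod_inv]

theorem part_le_sum {k : ℕ} (p : Nat.Partition k) {a : ℕ} (ha : a ∈ p.parts) : a ≤ k := by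
  conv_rhs => rw [← p.parts_sum]
  exact Multiset.single_le_sum (fun x _ => Nat.zero_le x) a ha

theorem Ple_eq_ppA (k N : ℕ) (h : k ≤ N) : Ple k N = ppA k := by
  rw [Ple, ppA, Fintype.card]
  congr 1
  rw [Finset.filter_true_of_mem]
  intro p _ j hj
  exact le_trans (part_le_sum p hj) h

theorem coeff_qInfA_inv (k : ℕ) : coeff k qInfA⁻¹ = ppA k := by
  have := coeff_inv_congr (A := qInfA) (B := qPochA k)
    (by rw [qInfA, PowerSeries.constantCoeff_mk, coeff_zero_eq_constantCoeff_apply,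
           constCoeff_qPochA]; norm_num)
    k (fun j hj => coeff_qInfA j k hj) k (le_refl k)
  rw [this, coeff_qPochA_inv, Ple_eq_ppA k k (le_refl k)]

theorem coeff_X_pow_mul_indicator (l i : ℕ) (hi : 1 ≤ i) (s : Set ℕ) :
    coeff l (X ^ i * indicatorSeries ℚ s) = if i ≤ l ∧ (l - i) ∈ s then 1 else 0 := by
  by_cases hil : i ≤ l
  · have key : coeff l (X ^ i * indicatorSeries ℚ s) =
        coeff (l - i) (indicatorSeries ℚ s) := by
      conv_lhs => rw [show l = l - i + i from by omega]
      exact PowerSeries.coeff_X_pow_mul _ _ _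
    rw [key, coeff_indicator]
    by_cases hs : l - i ∈ s
    · rw [if_pos hs, if_pos ⟨hil, hs⟩]
    · rw [if_neg hs, if_neg (fun h => hs h.2)]
  · rw [if_neg (fun h => hil h.1), coeff_mul]
    apply Finset.sum_eq_zero
    rintro ⟨x1, x2⟩ hx
    rw [HasAntidiagonal.mem_antidiagonal] at hx
    rw [coeff_X_pow, if_neg (by simp only at hx; omega), zero_mul]

theorem coeff_div_sum (l N : ℕ) :
    coeff l (∑ i ∈ Icc 1 N, (X : PowerSeries ℚ) ^ i * (1 - X ^ i)⁻¹) =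
      ((l.divisors.filter (· ≤ N)).card : ℚ) := by
  rw [map_sum]
  have h1 : ∀ i ∈ Icc 1 N, coeff l ((X : PowerSeries ℚ) ^ i * (1 - X ^ i)⁻¹) =
      if i ≤ l ∧ i ∣ l then 1 else 0 := by
    intro i hi
    rw [mem_Icc] at hi
    obtain ⟨i', rfl⟩ : ∃ j, j + 1 = i := ⟨i - 1, by omega⟩
    rw [num_series', coeff_X_pow_mul_indicator _ _ (by omega)]
    simp only [Set.mem_setOf_eq]
    by_cases hc : i' + 1 ≤ l ∧ i' + 1 ∣ l
    · rw [if_pos ⟨hc.1, Nat.dvd_sub hc.2 (dvd_refl _)⟩, if_pos hc]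
    · rw [if_neg _, if_neg hc]
      rintro ⟨hle, hdvd⟩
      apply hc
      refine ⟨hle, ?_⟩
      have heq : l - (i' + 1) + (i' + 1) = l := by omega
      exact heq ▸ dvd_add hdvd (dvd_refl _)
  rw [Finset.sum_congr rfl h1, Finset.sum_boole]
  congr 2
  have : (Icc 1 N).filter (fun i => i ≤ l ∧ i ∣ l) = l.divisors.filter (· ≤ N) := by
    ext x
    simp only [mem_filter, mem_Icc, Nat.mem_divisors]
    constructor
    · rintro ⟨⟨hx1, hxN⟩, hxl, hdvd⟩
      exact ⟨⟨hdvd, by omega⟩, hxN⟩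
    · rintro ⟨⟨hdvd, hl⟩, hxN⟩
      have := Nat.le_of_dvd (by omega) hdvd
      have := Nat.pos_of_dvd_of_pos hdvd (by omega)
      exact ⟨⟨by omega, hxN⟩, by omega, hdvd⟩
  rw [this]

theorem multiset_sum_le_of_le {s t : Multiset ℕ} (h : s ≤ t) : s.sum ≤ t.sum := by
  have h2 := tsub_add_cancel_of_le h
  calc s.sum ≤ (t - s).sum + s.sum := Nat.le_add_left _ _
    _ = t.sum := by rw [← Multiset.sum_add, h2]

theorem card_le_n {k : ℕ} (p : Nat.Partition k) : Multiset.card p.parts ≤ k := by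
  have h := Multiset.card_nsmul_le_sum (s := p.parts) (a := 1) (fun x hx => p.parts_pos hx)
  rw [p.parts_sum] at h
  simpa using h

theorem sup_le_n {k : ℕ} (p : Nat.Partition k) : p.parts.sup ≤ k :=
  Multiset.sup_le.mpr fun b hb => part_le_sum p hb

def fNval (k N : ℕ) : ℕ :=
  ((univ : Finset (Nat.Partition k)).filter fun p => N < p.parts.sup).card

theorem ppA_eq (k N : ℕ) : ppA k = Ple k N + fNval k N := by
  rw [Ple, fNval, ppA, Fintype.card]
  rw [← Finset.card_filter_add_card_filter_not
    (s := univ) (p := fun p : Nat.Partition k => ∀ j ∈ p.parts, j ≤ N)]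
  congr 2
  apply Finset.filter_congr
  intro p _
  rw [← Multiset.sup_le, not_le]

def W (k e : ℕ) : ℕ := ∑ μ : Nat.Partition k, (μ.parts.sup - e)

theorem sup_add_replicate (s : Multiset ℕ) (j e : ℕ) (hj : 1 ≤ j) :
    (s + Multiset.replicate j e).sup = s.sup ⊔ e := by
  rw [Multiset.sup_add]
  congr 1
  apply le_antisymm
  · rw [Multiset.sup_le]; intro b hb; rw [Multiset.eq_of_mem_replicate hb]
  · exact Multiset.le_sup (Multiset.mem_replicate.mpr ⟨by omega, rfl⟩)

theorem sup_max_sub (s e : ℕ) : (s ⊔ e) - e = s - e := by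
  rcases le_total s e with h | h
  · rw [sup_eq_right.mpr h]; omega
  · rw [sup_eq_left.mpr h]

def addRep (M e j : ℕ) (he : 1 ≤ e) (hejM : e * j ≤ M) (μ : Nat.Partition (M - e * j)) :
    Nat.Partition M where
  parts := μ.parts + Multiset.replicate j e
  parts_pos := by
    intro a ha
    rw [Multiset.mem_add] at ha
    rcases ha with ha | ha
    · exact μ.parts_pos ha
    · rw [Multiset.eq_of_mem_replicate ha]; omega
  parts_sum := by
    rw [Multiset.sum_add, μ.parts_sum, Multiset.sum_replicate, smul_eq_mul, mul_comm j e]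
    omega

def remRep (M e j : ℕ) (p : Nat.Partition M) : Nat.Partition (M - e * j) :=
  if h : j ≤ p.parts.count e then
    { parts := p.parts - Multiset.replicate j e
      parts_pos := fun {a} ha =>
        p.parts_pos (Multiset.mem_of_le (Multiset.sub_le_self _ _) ha)
      parts_sum := by
        have hle := Multiset.le_count_iff_replicate_le.mp h
        have h2 := tsub_add_cancel_of_le hle
        have h3 : (p.parts - Multiset.replicate j e).sum + j * e = M := by
          rw [← smul_eq_mul, ← Multiset.sum_replicate, ← Multiset.sum_add, h2, p.parts_sum]
        rw [mul_comm j e] at h3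
        omega }
  else
    { parts := Multiset.replicate (M - e * j) 1
      parts_pos := fun {a} ha => by rw [Multiset.eq_of_mem_replicate ha]; omega
      parts_sum := by rw [Multiset.sum_replicate, smul_eq_mul, mul_one] }

theorem K4 (M e j : ℕ) (he : 1 ≤ e) (hj : 1 ≤ j) (hejM : e * j ≤ M) :
    W (M - e * j) e =
      ∑ p ∈ (univ : Finset (Nat.Partition M)).filter fun p => j ≤ p.parts.count e,
        (p.parts.sup - e) := by
  rw [W]
  have hcount : ∀ μ : Nat.Partition (M - e * j),
      j ≤ (addRep M e j he hejM μ).parts.count e := by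
    intro μ
    show j ≤ Multiset.count e (μ.parts + Multiset.replicate j e)
    rw [Multiset.count_add, Multiset.count_replicate, if_pos rfl]
    omega
  refine Finset.sum_nbij' (addRep M e j he hejM) (remRep M e j)
    (fun μ _ => mem_filter.mpr ⟨mem_univ _, hcount μ⟩) (fun p _ => mem_univ _) ?_ ?_ ?_
  · intro μ _
    rw [remRep, dif_pos (hcount μ)]
    apply Nat.Partition.ext
    show (μ.parts + Multiset.replicate j e) - Multiset.replicate j e = μ.parts
    exact add_tsub_cancel_right _ _
  · intro p hp
    have h := (mem_filter.mp hp).2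
    rw [remRep, dif_pos h]
    apply Nat.Partition.ext
    show (p.parts - Multiset.replicate j e) + Multiset.replicate j e = p.parts
    exact tsub_add_cancel_of_le (Multiset.le_count_iff_replicate_le.mp h)
  · intro μ _
    show μ.parts.sup - e = (μ.parts + Multiset.replicate j e).sup - e
    rw [sup_add_replicate _ _ _ hj, sup_max_sub]

def gvalA (l N : ℕ) : ℕ := (l.divisors.filter (· ≤ N)).card

def Vval {M : ℕ} (p : Nat.Partition M) : ℕ :=
  ∑ e ∈ p.parts.toFinset, p.parts.count e * (p.parts.sup - e)

theorem fNval_eq_sum (k N : ℕ) :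
    fNval k N = ∑ μ : Nat.Partition k, (if N < μ.parts.sup then (1:ℕ) else 0) := by
  rw [fNval, Finset.sum_boole, Nat.cast_id]

theorem gvalA_eq_sum (l N : ℕ) :
    gvalA l N = ∑ ej ∈ l.divisorsAntidiagonal, (if ej.1 ≤ N then (1:ℕ) else 0) := by
  rw [gvalA, Nat.sum_divisorsAntidiagonal (f := fun e _ => if e ≤ N then (1:ℕ) else 0),
    Finset.sum_boole, Nat.cast_id]

theorem count_N (Mp B e : ℕ) (he : 1 ≤ e) (hB : B ≤ Mp) :
    (∑ N ∈ Icc 1 Mp, (if N < B then (1:ℕ) else 0) * (if e ≤ N then 1 else 0)) = B - e := by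
  have h1 : ∀ N ∈ Icc 1 Mp, (if N < B then (1:ℕ) else 0) * (if e ≤ N then 1 else 0)
      = if N ∈ Ico e B then 1 else 0 := by
    intro N hN
    by_cases h1 : N < B <;> by_cases h2 : e ≤ N <;> simp [h1, h2, mem_Ico] <;> omega
  rw [Finset.sum_congr rfl h1, Finset.sum_ite_mem, Finset.sum_const, smul_eq_mul, mul_one]
  have h2 : Icc 1 Mp ∩ Ico e B = Ico e B := by
    ext N
    simp only [mem_inter, mem_Icc, mem_Ico]
    omega
  rw [h2, Nat.card_Ico]

theorem perP (M : ℕ) (p : Nat.Partition M) :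
    ∑ q ∈ ((Icc 1 M ×ˢ Icc 1 M).filter fun q => q.1 * q.2 ≤ M).filter
        (fun q => q.2 ≤ p.parts.count q.1), (p.parts.sup - q.1) = Vval p := by
  rw [Finset.filter_filter]
  have hset : (Icc 1 M ×ˢ Icc 1 M).filter (fun q => q.1 * q.2 ≤ M ∧ q.2 ≤ p.parts.count q.1)
      = (p.parts.toFinset ×ˢ Icc 1 M).filter (fun q => q.2 ≤ p.parts.count q.1) := by
    ext ⟨e, jj⟩
    simp only [mem_filter, mem_product, mem_Icc, Multiset.mem_toFinset]
    constructor
    · rintro ⟨⟨⟨he1, heM⟩, hj⟩, hejM, hcnt⟩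
      refine ⟨⟨?_, hj⟩, hcnt⟩
      rw [← Multiset.count_pos]; omega
    · rintro ⟨⟨he, hj⟩, hcnt⟩
      have hepos := p.parts_pos he
      have heM := part_le_sum p he
      have hrep : Multiset.replicate jj e ≤ p.parts := Multiset.le_count_iff_replicate_le.mp hcnt
      have hsum := multiset_sum_le_of_le hrep
      rw [Multiset.sum_replicate, smul_eq_mul, p.parts_sum] at hsum
      exact ⟨⟨⟨by omega, by omega⟩, hj⟩, by rw [mul_comm]; exact hsum, hcnt⟩
  rw [hset, Finset.sum_filter, Finset.sum_product]
  dsimp only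
  rw [Vval]
  apply Finset.sum_congr rfl
  intro e he
  rw [← Finset.sum_filter]
  have hcM : p.parts.count e ≤ M :=
    le_trans (Multiset.count_le_card e p.parts) (card_le_n p)
  have h3 : (Icc 1 M).filter (fun jj => jj ≤ p.parts.count e) = Icc 1 (p.parts.count e) := by
    ext jj
    simp only [mem_filter, mem_Icc]
    omega
  rw [h3, Finset.sum_const, Nat.card_Icc, smul_eq_mul]
  congr 1

theorem KEY (M : ℕ) :
    (∑ N ∈ Icc 1 (M + 1), ∑ kl ∈ antidiagonal M, fNval kl.1 N * gvalA kl.2 N) =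
      ∑ p : Nat.Partition M, Vval p := by
  have step1 : ∀ N ∈ Icc 1 (M+1), ∀ kl ∈ antidiagonal M,
      fNval kl.1 N * gvalA kl.2 N =
      ∑ μ : Nat.Partition kl.1, ∑ ej ∈ kl.2.divisorsAntidiagonal,
        (if N < μ.parts.sup then (1:ℕ) else 0) * (if ej.1 ≤ N then 1 else 0) := by
    intro N _ kl _
    rw [fNval_eq_sum, gvalA_eq_sum, Finset.sum_mul_sum]
  rw [Finset.sum_congr rfl (fun N hN => Finset.sum_congr rfl (step1 N hN))]
  rw [Finset.sum_comm]
  rw [Finset.sum_congr rfl (fun kl _ => Finset.sum_comm)]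
  rw [Finset.sum_congr rfl (fun kl _ => Finset.sum_congr rfl (fun μ _ => Finset.sum_comm))]
  have step4 : ∀ kl ∈ antidiagonal M, ∀ μ : Nat.Partition kl.1,
      ∀ ej ∈ kl.2.divisorsAntidiagonal,
      (∑ N ∈ Icc 1 (M+1), (if N < μ.parts.sup then (1:ℕ) else 0) * (if ej.1 ≤ N then 1 else 0))
        = μ.parts.sup - ej.1 := by
    intro kl hkl μ ej hej
    rw [HasAntidiagonal.mem_antidiagonal] at hkl
    rw [Nat.mem_divisorsAntidiagonal] at hej
    apply count_N
    · rcases Nat.eq_zero_or_pos ej.1 with h | h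
      · exfalso; apply hej.2; rw [← hej.1, h, zero_mul]
      · omega
    · exact le_trans (sup_le_n μ) (by omega)
  rw [Finset.sum_congr rfl (fun kl hkl => Finset.sum_congr rfl (fun μ _ =>
    Finset.sum_congr rfl (fun ej hej => step4 kl hkl μ ej hej)))]
  rw [Finset.sum_congr rfl (fun kl _ => Finset.sum_comm)]
  have step7 : (∑ kl ∈ antidiagonal M, ∑ ej ∈ kl.2.divisorsAntidiagonal, W kl.1 ej.1)
      = ∑ q ∈ (Icc 1 M ×ˢ Icc 1 M).filter (fun q => q.1 * q.2 ≤ M), W (M - q.1 * q.2) q.1 := by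
    rw [← Finset.sum_sigma (antidiagonal M) (fun kl => kl.2.divisorsAntidiagonal)
          (fun x => W x.1.1 x.2.1)]
    refine Finset.sum_nbij' (fun x => x.2) (fun q => ⟨(M - q.1 * q.2, q.1 * q.2), q⟩)
      ?_ ?_ ?_ ?_ ?_
    · rintro ⟨⟨k, l⟩, ⟨e, jj⟩⟩ hx
      rw [Finset.mem_sigma] at hx
      obtain ⟨hkl, hej⟩ := hx
      rw [HasAntidiagonal.mem_antidiagonal] at hkl
      rw [Nat.mem_divisorsAntidiagonal] at hej
      obtain ⟨hejl, hl0⟩ := hej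
      dsimp only at hejl hkl hl0
      have he : 1 ≤ e := by
        rcases Nat.eq_zero_or_pos e with h | h
        · exfalso; apply hl0; rw [← hejl, h, zero_mul]
        · omega
      have hj : 1 ≤ jj := by
        rcases Nat.eq_zero_or_pos jj with h | h
        · exfalso; apply hl0; rw [← hejl, h, mul_zero]
        · omega
      have h1 : e ≤ e * jj := Nat.le_mul_of_pos_right e hj
      have h2 : jj ≤ e * jj := Nat.le_mul_of_pos_left jj he
      simp only [mem_filter, mem_product, mem_Icc]
      refine ⟨⟨⟨he, by omega⟩, ⟨hj, by omega⟩⟩, by omega⟩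
    · rintro ⟨e, jj⟩ hq
      simp only [mem_filter, mem_product, mem_Icc] at hq
      rw [Finset.mem_sigma, HasAntidiagonal.mem_antidiagonal, Nat.mem_divisorsAntidiagonal]
      refine ⟨?_, rfl, ?_⟩
      · dsimp only; omega
      · dsimp only; exact Nat.mul_ne_zero (by omega) (by omega)
    · rintro ⟨⟨k, l⟩, ⟨e, jj⟩⟩ hx
      rw [Finset.mem_sigma] at hx
      obtain ⟨hkl, hej⟩ := hx
      rw [HasAntidiagonal.mem_antidiagonal] at hkl
      rw [Nat.mem_divisorsAntidiagonal] at hej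
      obtain ⟨hejl, hl0⟩ := hej
      dsimp only at hkl hejl hl0
      have hprod : (M - e * jj, e * jj) = (k, l) := by
        rw [Prod.ext_iff]
        dsimp only
        omega
      dsimp only
      rw [hprod]
    · rintro ⟨e, jj⟩ hq
      rfl
    · rintro ⟨⟨k, l⟩, ⟨e, jj⟩⟩ hx
      rw [Finset.mem_sigma] at hx
      obtain ⟨hkl, hej⟩ := hx
      rw [HasAntidiagonal.mem_antidiagonal] at hkl
      rw [Nat.mem_divisorsAntidiagonal] at hej
      obtain ⟨hejl, hl0⟩ := hej
      dsimp only at hkl hejl hl0 ⊢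
      have : M - e * jj = k := by omega
      rw [this]
  have hW : (∑ kl ∈ antidiagonal M, ∑ y ∈ kl.2.divisorsAntidiagonal,
      ∑ x : kl.1.Partition, (x.parts.sup - y.1))
      = ∑ kl ∈ antidiagonal M, ∑ ej ∈ kl.2.divisorsAntidiagonal, W kl.1 ej.1 := rfl
  rw [hW, step7]
  have step8 : ∀ q ∈ (Icc 1 M ×ˢ Icc 1 M).filter (fun q => q.1 * q.2 ≤ M),
      W (M - q.1 * q.2) q.1 = ∑ p ∈ (univ : Finset (Nat.Partition M)).filter
        (fun p => q.2 ≤ p.parts.count q.1), (p.parts.sup - q.1) := by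
    rintro ⟨e, jj⟩ hq
    simp only [mem_filter, mem_product, mem_Icc] at hq
    exact K4 M e jj hq.1.1.1 hq.1.2.1 hq.2
  rw [Finset.sum_congr rfl step8]
  rw [Finset.sum_congr rfl (fun q _ => Finset.sum_filter _ _), Finset.sum_comm]
  apply Finset.sum_congr rfl
  intro p _
  rw [← Finset.sum_filter, perP M p]

theorem list_range_sum (n : ℕ) (f : ℕ → ℕ) :
    ((List.range n).map f).sum = ∑ i ∈ Finset.range n, f i := by
  rw [Finset.sum_eq_multiset_sum, Finset.range_val, ← Multiset.coe_range, Multiset.map_coe,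
    Multiset.sum_coe]

theorem card_YD (μ : YoungDiagram) : μ.cells.card = μ.rowLens.sum := by
  rw [Finset.card_eq_sum_card_fiberwise (f := fun c => c.1) (t := Finset.range (μ.colLen 0))
    (fun c hc => by
      rw [Finset.mem_coe, Finset.mem_range]
      rw [Finset.mem_coe, YoungDiagram.mem_cells] at hc
      have h1 : c.1 < μ.colLen c.2 := by
        rw [← YoungDiagram.mem_iff_lt_colLen]; rwa [Prod.mk.eta]
      exact lt_of_lt_of_le h1 (μ.colLen_anti 0 c.2 (Nat.zero_le _)))]
  rw [YoungDiagram.rowLens, list_range_sum]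
  apply Finset.sum_congr rfl
  intro i _
  rw [YoungDiagram.rowLen_eq_card]
  rfl

theorem transpose_card (μ : YoungDiagram) : μ.transpose.cells.card = μ.cells.card := by
  apply Finset.card_bij (fun c _ => c.swap)
  · intro c hc
    rw [YoungDiagram.mem_cells] at hc ⊢
    exact YoungDiagram.mem_transpose.mp hc
  · intro a _ b _ h
    exact Prod.swap_injective h
  · intro b hb
    refine ⟨b.swap, ?_, Prod.swap_swap b⟩
    rw [YoungDiagram.mem_cells, YoungDiagram.mem_transpose, Prod.swap_swap]
    exact (YoungDiagram.mem_cells _).mp hb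

theorem sup_rowLens (μ : YoungDiagram) : (↑μ.rowLens : Multiset ℕ).sup = μ.rowLen 0 := by
  apply le_antisymm
  · rw [Multiset.sup_le]
    intro b hb
    rw [Multiset.mem_coe, YoungDiagram.rowLens, List.mem_map] at hb
    obtain ⟨i, _, rfl⟩ := hb
    exact μ.rowLen_anti 0 i (Nat.zero_le i)
  · rcases Nat.eq_zero_or_pos (μ.colLen 0) with h | h
    · have h0 : μ.rowLen 0 = 0 := by
        by_contra hh
        have h1 : (0, 0) ∈ μ := YoungDiagram.mem_iff_lt_rowLen.mpr (by omega)
        have h2 := YoungDiagram.mem_iff_lt_colLen.mp h1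
        omega
      rw [h0]
      exact Nat.zero_le _
    · apply Multiset.le_sup
      rw [Multiset.mem_coe, YoungDiagram.rowLens]
      exact List.mem_map.mpr ⟨0, List.mem_range.mpr h, rfl⟩

def toYD {n : ℕ} (p : Nat.Partition n) : YoungDiagram :=
  YoungDiagram.ofRowLens (Multiset.sort p.parts (· ≥ ·)) (Multiset.pairwise_sort _ _).sortedGE

theorem rowLens_toYD {n : ℕ} (p : Nat.Partition n) :
    (toYD p).rowLens = Multiset.sort p.parts (· ≥ ·) := by
  apply YoungDiagram.rowLens_ofRowLens_eq_self
  intro x hx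
  exact p.parts_pos (by rwa [← Multiset.mem_sort (· ≥ ·)])

def conj {n : ℕ} (p : Nat.Partition n) : Nat.Partition n where
  parts := ↑(toYD p).transpose.rowLens
  parts_pos := fun {a} ha =>
    YoungDiagram.pos_of_mem_rowLens _ a (Multiset.mem_coe.mp ha)
  parts_sum := by
    rw [Multiset.sum_coe, ← card_YD, transpose_card, card_YD, rowLens_toYD]
    have h := Multiset.sort_eq p.parts (· ≥ ·)
    calc (Multiset.sort p.parts (· ≥ ·)).sum = (↑(Multiset.sort p.parts (· ≥ ·)) : Multiset ℕ).sum := (Multiset.sum_coe _).symm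
      _ = p.parts.sum := by rw [h]
      _ = n := p.parts_sum

theorem conj_card {n : ℕ} (p : Nat.Partition n) :
    Multiset.card (conj p).parts = p.parts.sup := by
  show Multiset.card (↑(toYD p).transpose.rowLens : Multiset ℕ) = p.parts.sup
  rw [Multiset.coe_card, YoungDiagram.length_rowLens, YoungDiagram.colLen_transpose]
  rw [← sup_rowLens, rowLens_toYD, Multiset.sort_eq]

theorem conj_sup {n : ℕ} (p : Nat.Partition n) :
    (conj p).parts.sup = Multiset.card p.parts := by
  show (↑(toYD p).transpose.rowLens : Multiset ℕ).sup = _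
  rw [sup_rowLens, YoungDiagram.rowLen_transpose, ← YoungDiagram.length_rowLens, rowLens_toYD,
    ← Multiset.coe_card, Multiset.sort_eq]

theorem ofRowLens_congr {w w' : List ℕ} {hw : w.SortedGE} {hw' : w'.SortedGE}
    (h : w = w') : YoungDiagram.ofRowLens w hw = YoungDiagram.ofRowLens w' hw' := by
  subst h; rfl

theorem toYD_conj {n : ℕ} (p : Nat.Partition n) :
    toYD (conj p) = (toYD p).transpose := by
  rw [toYD]
  have h : Multiset.sort (conj p).parts (· ≥ ·) = (toYD p).transpose.rowLens := by
    refine (fun hp h1 h2 => List.Perm.eq_of_sortedGE h1 h2 hp) ?_ ?_ ?_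
    · rw [← Multiset.coe_eq_coe, Multiset.sort_eq]; rfl
    · exact (Multiset.pairwise_sort _ _).sortedGE
    · exact YoungDiagram.rowLens_sorted _
  rw [ofRowLens_congr h]
  exact YoungDiagram.ofRowLens_to_rowLens_eq_self

theorem conj_conj {n : ℕ} (p : Nat.Partition n) : conj (conj p) = p := by
  apply Nat.Partition.ext
  show ↑(toYD (conj p)).transpose.rowLens = p.parts
  rw [toYD_conj, YoungDiagram.transpose_transpose, rowLens_toYD, Multiset.sort_eq]

theorem sum_sup_sq_eq (n : ℕ) :
    ∑ p : Nat.Partition n, ((p.parts.sup : ℚ)) ^ 2 =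
      ∑ p : Nat.Partition n, ((Multiset.card p.parts : ℚ)) ^ 2 := by
  refine Finset.sum_nbij' conj conj (fun p _ => mem_univ _) (fun p _ => mem_univ _)
    (fun p _ => conj_conj p) (fun p _ => conj_conj p) ?_
  intro p _
  rw [conj_card]

end Aux

namespace Aux

theorem p2_eq (M : ℕ) : p2 M = ∑ p : Nat.Partition M, (Multiset.card p.parts) ^ 2 := by
  rw [p2, ← Finset.sum_fiberwise_of_maps_to
      (g := fun p : Nat.Partition M => Multiset.card p.parts) (t := range (M + 1))
      (fun p _ => Finset.mem_range.mpr (show Multiset.card p.parts < M + 1 by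
        have := card_le_n p; omega))
      (fun p => (Multiset.card p.parts) ^ 2)]
  apply Finset.sum_congr rfl
  intro m _
  rw [pmn, Finset.sum_congr rfl
    (fun p hp => by rw [show Multiset.card p.parts = m from (Finset.mem_filter.mp hp).2]),
    Finset.sum_const, smul_eq_mul, mul_comm]

theorem N2_eq (M : ℕ) : N2 M = ∑ p : Nat.Partition M, (rank p) ^ 2 := by
  rw [N2, ← Finset.sum_fiberwise_of_maps_to
      (g := fun p : Nat.Partition M => rank p) (t := Finset.Icc (-(M : ℤ)) (M : ℤ))
      (fun p _ => show rank p ∈ Finset.Icc (-(M : ℤ)) (M : ℤ) by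
        have hr : rank p = (p.parts.sup : ℤ) - Multiset.card p.parts := rfl
        have h1 := sup_le_n p
        have h2 := card_le_n p
        rw [Finset.mem_Icc, hr]
        omega)
      (fun p => (rank p) ^ 2)]
  apply Finset.sum_congr rfl
  intro m _
  rw [Nrank, Finset.sum_congr rfl
    (fun p hp => by rw [show rank p = m from (Finset.mem_filter.mp hp).2]),
    Finset.sum_const, nsmul_eq_mul, mul_comm]

theorem Vval_eq (M : ℕ) (p : Nat.Partition M) :
    (Vval p : ℚ) = (p.parts.sup : ℚ) * (Multiset.card p.parts : ℚ) - M := by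
  have hN : Vval p + M = Multiset.card p.parts * p.parts.sup := by
    have h1 : ∀ e ∈ p.parts.toFinset,
        p.parts.count e * (p.parts.sup - e) + p.parts.count e * e
          = p.parts.count e * p.parts.sup := by
      intro e he
      have h2 : e ≤ p.parts.sup := Multiset.le_sup (Multiset.mem_toFinset.mp he)
      rw [← Nat.mul_add, Nat.sub_add_cancel h2]
    have h3 : ∑ e ∈ p.parts.toFinset, p.parts.count e * e = M := by
      have h4 := Finset.sum_multiset_map_count p.parts (id : ℕ → ℕ)
      rw [Multiset.map_id, p.parts_sum] at h4
      calc ∑ e ∈ p.parts.toFinset, p.parts.count e * e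
          = ∑ e ∈ p.parts.toFinset, p.parts.count e • (id e) := by
            apply Finset.sum_congr rfl
            intro e _
            rw [smul_eq_mul]
            rfl
        _ = M := h4.symm
    have h5 : ∑ e ∈ p.parts.toFinset, p.parts.count e * p.parts.sup
        = Multiset.card p.parts * p.parts.sup := by
      rw [← Finset.sum_mul, Multiset.toFinset_sum_count_eq]
    have h6 : ∑ e ∈ p.parts.toFinset,
        (p.parts.count e * (p.parts.sup - e) + p.parts.count e * e)
        = Multiset.card p.parts * p.parts.sup := by
      rw [Finset.sum_congr rfl h1, h5]
    rw [Finset.sum_add_distrib] at h6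
    rw [Vval]
    omega
  have := congrArg (fun x : ℕ => (x : ℚ)) hN
  push_cast at this
  linarith [this]

theorem pp_eq_ppA : pp = ppA := rfl

theorem coeff_lhs (M n : ℕ) :
    coeff M ((qInf⁻¹ - (qPoch (n + 1))⁻¹) *
        ∑ i ∈ Icc 1 (n + 1), (X : PowerSeries ℚ) ^ i * (1 - X ^ i)⁻¹) =
      ((∑ kl ∈ antidiagonal M, fNval kl.1 (n + 1) * gvalA kl.2 (n + 1) : ℕ) : ℚ) := by
  rw [coeff_mul]
  push_cast
  apply Finset.sum_congr rfl
  intro kl _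
  have e1 : coeff kl.1 (qInf⁻¹ - (qPoch (n + 1))⁻¹) = (fNval kl.1 (n + 1) : ℚ) := by
    rw [map_sub]
    have h1 : qInf = qInfA := rfl
    have h2 : qPoch (n + 1) = qPochA (n + 1) := rfl
    rw [h1, h2, coeff_qInfA_inv, coeff_qPochA_inv]
    have h3 := ppA_eq kl.1 (n + 1)
    have h4 := congrArg (fun x : ℕ => (x : ℚ)) h3
    push_cast at h4
    linarith [h4]
  have e2 : coeff kl.2 (∑ i ∈ Icc 1 (n + 1), (X : PowerSeries ℚ) ^ i * (1 - X ^ i)⁻¹)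
      = (gvalA kl.2 (n + 1) : ℚ) := by
    rw [coeff_div_sum, gvalA]
  rw [e1, e2]

theorem KEY' (M : ℕ) :
    (∑ n ∈ range (M + 1), ∑ kl ∈ antidiagonal M, fNval kl.1 (n + 1) * gvalA kl.2 (n + 1)) =
      ∑ p : Nat.Partition M, Vval p := by
  rw [← KEY M]
  rw [show Icc 1 (M + 1) = Ico 1 (M + 2) from by rw [← Finset.Ico_add_one_right_eq_Icc]; rfl,
    Finset.sum_Ico_eq_sum_range]
  have h : M + 2 - 1 = M + 1 := by omega
  rw [h]
  apply Finset.sum_congr rfl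
  intro n _
  rw [add_comm 1 n]

end Aux

/-- Σ_{n≥1} (1/(q;q)_∞ − 1/(q;q)_n) Σ_{i=1}^n q^i/(1−q^i)
      = Σ_{n≥1} (p₂(n) − n p(n) − N₂(n)/2) qⁿ. -/
theorem stmt12 :
    seriesSum (fun n => (qInf⁻¹ - (qPoch (n + 1))⁻¹) *
        ∑ i ∈ Icc 1 (n + 1), X ^ i * (1 - X ^ i)⁻¹) =
      PowerSeries.mk fun n => (p2 n : ℚ) - n * pp n - (N2 n : ℚ) / 2 := by
  apply PowerSeries.ext
  intro M
  rw [seriesSum, coeff_mk, coeff_mk]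
  rw [Finset.sum_congr rfl (fun n _ => Aux.coeff_lhs M n)]
  rw [← Nat.cast_sum, Aux.KEY' M, Nat.cast_sum]
  rw [Finset.sum_congr rfl (fun p _ => Aux.Vval_eq M p)]
  rw [Finset.sum_sub_distrib, Finset.sum_const, Finset.card_univ]
  have hpp : (Fintype.card (Nat.Partition M)) • (M : ℚ) = (M : ℚ) * pp M := by
    rw [nsmul_eq_mul, mul_comm]
    rfl
  rw [hpp]
  have hp2 : (p2 M : ℚ) = ∑ p : Nat.Partition M, (Multiset.card p.parts : ℚ) ^ 2 := by
    rw [Aux.p2_eq]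
    push_cast
    rfl
  have hN2 : (N2 M : ℚ)
      = ∑ p : Nat.Partition M, ((p.parts.sup : ℚ) - Multiset.card p.parts) ^ 2 := by
    rw [Aux.N2_eq]
    push_cast
    apply Finset.sum_congr rfl
    intro p _
    rw [rank]
    push_cast
    ring
  rw [hp2, hN2]
  have hexp : ∑ p : Nat.Partition M, ((p.parts.sup : ℚ) - Multiset.card p.parts) ^ 2
      = ∑ p : Nat.Partition M, ((p.parts.sup : ℚ) ^ 2 + (Multiset.card p.parts : ℚ) ^ 2
          - 2 * ((p.parts.sup : ℚ) * Multiset.card p.parts)) := by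
    apply Finset.sum_congr rfl
    intro p _
    ring
  rw [hexp]
  rw [Finset.sum_sub_distrib, Finset.sum_add_distrib, ← Finset.mul_sum, Aux.sum_sup_sq_eq]
  ring
end
end
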